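/- arXiv:1805.08758 — 6 statements merged into one kernel-verified Lean document; each statement's English description precedes it below -/
import Mathlib

section
/- In the gadget network built from a directed graph D, if an outcome A admits no blocking path or cycle, then A contains no contract of Z, and the sets Q = {v ∈ V : a_v a'_v ∉ A} and R = V \ Q are both acyclic in D. -/
open Finset

/-- A trading network: firms `F`, contracts `X`, seller/buyer maps, and choice functions. -/
structure TradingNetwork (F X : Type) where
  sell : X → F
  buy  : X → F
  C : F → Finset X → Finset X

namespace TradingNetwork

variable {F X : Type} [DecidableEq F] [DecidableEq X] [Fintype X]

/-- The contracts in `Y` involving firm `f`. -/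
def own (N : TradingNetwork F X) (f : F) (Y : Finset X) : Finset X :=
  Y.filter fun x => N.sell x = f ∨ N.buy x = f

/-- Upstream contracts of `f` (contracts where `f` is the buyer). -/
def XB (N : TradingNetwork F X) (f : F) : Finset X := univ.filter fun x => N.buy x = f

/-- Downstream contracts of `f` (contracts where `f` is the seller). -/
def XS (N : TradingNetwork F X) (f : F) : Finset X := univ.filter fun x => N.sell x = f

/-- A terminal agent: a terminal seller (no upstream contracts) or terminal buyer. -/
def Terminal (N : TradingNetwork F X) (f : F) : Prop := N.XB f = ∅ ∨ N.XS f = ∅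

/-- `S` consists of the `k` most preferred elements of `Y` according to the
rank function `r` (lower rank = more preferred). -/
def IsTop (r : X → ℕ) (k : ℕ) (Y S : Finset X) : Prop :=
  S ⊆ Y ∧ S.card = k ∧ ∀ x ∈ S, ∀ y ∈ Y, y ∉ S → r x < r y

/-- The choice functions of `N` are flow-based with respect to the preference ranks
`rkB` (over upstream contracts) and `rkS` (over downstream contracts): terminal agents
accept everything, and a non-terminal agent offered upstream contracts `Y ∩ XB f` and
downstream contracts `Y ∩ XS f` chooses its `k = min (|Y ∩ XB f|) (|Y ∩ XS f|)` most
preferred contracts on each side. -/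
structure FlowBased (N : TradingNetwork F X) (rkB rkS : F → X → ℕ) : Prop where
  injB : ∀ f, ∀ x ∈ N.XB f, ∀ y ∈ N.XB f, rkB f x = rkB f y → x = y
  injS : ∀ f, ∀ x ∈ N.XS f, ∀ y ∈ N.XS f, rkS f x = rkS f y → x = y
  C_own : ∀ f Y, N.C f Y ⊆ N.own f Y
  terminal_accepts : ∀ f, N.Terminal f → ∀ Y, N.C f Y = N.own f Y
  top_choice : ∀ f, ¬ N.Terminal f → ∀ Y : Finset X,
      IsTop (rkB f) (min (Y ∩ N.XB f).card (Y ∩ N.XS f).card)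
        (Y ∩ N.XB f) (N.C f Y ∩ N.XB f)
    ∧ IsTop (rkS f) (min (Y ∩ N.XB f).card (Y ∩ N.XS f).card)
        (Y ∩ N.XS f) (N.C f Y ∩ N.XS f)

/-- A flow network: a trading network with no self-loop contracts, flow-based choice
functions, and exactly two terminal agents. -/
instance (N : TradingNetwork F X) : DecidablePred N.Terminal := fun f =>
  decidable_of_iff (N.XB f = ∅ ∨ N.XS f = ∅) Iff.rfl

def IsFlowNetwork [Fintype F] (N : TradingNetwork F X) (rkB rkS : F → X → ℕ) : Prop :=
  (∀ x, N.sell x ≠ N.buy x) ∧ N.FlowBased rkB rkS ∧ Fintype.card {f // N.Terminal f} = 2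

/-- An outcome is acceptable (individually rational for every firm). -/
def Acceptable (N : TradingNetwork F X) (A : Finset X) : Prop :=
  ∀ f, N.C f (N.own f A) = N.own f A

/-- `B` is `(A,f)`-acceptable: `f` chooses all its contracts in `B` when offered `B` alongside `A`. -/
def AccAlongside (N : TradingNetwork F X) (A B : Finset X) (f : F) : Prop :=
  N.own f B ⊆ N.C f (N.own f A ∪ N.own f B)

/-- Firm `f` is involved in the contract set `B`. -/
def Involved (N : TradingNetwork F X) (B : Finset X) (f : F) : Prop := (N.own f B).Nonempty

/-- `Z` is a blocking set for the outcome `A`. -/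
def Blocks (N : TradingNetwork F X) (A Z : Finset X) : Prop :=
  Z.Nonempty ∧ Disjoint Z A ∧ ∀ f, N.Involved Z f → N.AccAlongside A Z f

/-- A stable outcome: acceptable and admitting no blocking set. -/
def Stable (N : TradingNetwork F X) (A : Finset X) : Prop :=
  N.Acceptable A ∧ ¬ ∃ Z, N.Blocks A Z

/-- A path: consecutive contracts, with all involved firms distinct. -/
def IsPath (N : TradingNetwork F X) (l : List X) : Prop :=
  ∃ h : l ≠ [], l.Chain' (fun x y => N.buy x = N.sell y) ∧
    (N.sell (l.head h) :: l.map N.buy).Nodup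

/-- A cycle: consecutive contracts with distinct sellers, returning to the start. -/
def IsCycle (N : TradingNetwork F X) (l : List X) : Prop :=
  ∃ h : l ≠ [], l.Chain' (fun x y => N.buy x = N.sell y) ∧
    (l.map N.sell).Nodup ∧ N.buy (l.getLast h) = N.sell (l.head h)

/-- `l` is a blocking path or blocking cycle for the outcome `A`. -/
def BlockingPathOrCycle (N : TradingNetwork F X) (A : Finset X) (l : List X) : Prop :=
  (N.IsPath l ∨ N.IsCycle l) ∧ Disjoint l.toFinset A ∧
    ∀ f, N.Involved l.toFinset f → N.AccAlongside A l.toFinset f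

/-- A path-or-cycle-stable outcome. -/
def PathOrCycleStable (N : TradingNetwork F X) (A : Finset X) : Prop :=
  N.Acceptable A ∧ ¬ ∃ l : List X, N.BlockingPathOrCycle A l

/-- Chosen upstream contracts of `f` when offered upstream contracts `Y` and downstream `Z`. -/
def CB (N : TradingNetwork F X) (f : F) (Y Z : Finset X) : Finset X :=
  N.C f ((Y ∩ N.XB f) ∪ (Z ∩ N.XS f)) ∩ N.XB f

/-- Chosen downstream contracts of `f` when offered downstream `Z` and upstream `Y`. -/
def CS (N : TradingNetwork F X) (f : F) (Z Y : Finset X) : Finset X :=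
  N.C f ((Y ∩ N.XB f) ∪ (Z ∩ N.XS f)) ∩ N.XS f

/-- Rejected upstream contracts. -/
def RB (N : TradingNetwork F X) (f : F) (Y Z : Finset X) : Finset X :=
  (Y ∩ N.XB f) \ N.CB f Y Z

/-- Rejected downstream contracts. -/
def RS (N : TradingNetwork F X) (f : F) (Z Y : Finset X) : Finset X :=
  (Z ∩ N.XS f) \ N.CS f Z Y

/-- Full substitutability (same-side substitutability and cross-side complementarity)
of the choice function of firm `f`. -/
def FullySubstitutableAt (N : TradingNetwork F X) (f : F) : Prop :=
  ∀ Y' Y Z' Z : Finset X, Y' ⊆ Y → Z' ⊆ Z →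
    N.RB f Y' Z ⊆ N.RB f Y Z ∧ N.RS f Z' Y ⊆ N.RS f Z Y ∧
    N.RB f Y Z ⊆ N.RB f Y Z' ∧ N.RS f Z Y ⊆ N.RS f Z Y'

/-- Full substitutability of all choice functions. -/
def FullySubstitutable (N : TradingNetwork F X) : Prop :=
  ∀ f, N.FullySubstitutableAt f

/-- The irrelevance of rejected contracts condition for the choice function of firm `f`. -/
def IRCAt (N : TradingNetwork F X) (f : F) : Prop :=
  ∀ Y Z : Finset X, N.C f Y ⊆ Z → Z ⊆ Y → N.C f Z = N.C f Y

/-- The irrelevance of rejected contracts condition. -/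
def IRC (N : TradingNetwork F X) : Prop := ∀ f, N.IRCAt f

end TradingNetwork

/-! ### The gadget network built from a directed graph -/

/-- The induced subgraph on the vertex set `U` contains a directed cycle. -/
def HasCycleIn {V : Type} [DecidableEq V] (adj : V → V → Bool) (U : Finset V) : Prop :=
  ∃ l : List V, ∃ h : l ≠ [], l.Nodup ∧ (∀ v ∈ l, v ∈ U) ∧
    l.Chain' (fun u v => adj u v = true) ∧ adj (l.getLast h) (l.head h) = true

/-- Firms of the gadget network: the two terminal firms `s = Sum.inl false` and
`t = Sum.inl true`, and for each vertex `v` the six firms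
`s_v = (v,0)`, `a_v = (v,1)`, `a'_v = (v,2)`, `b_v = (v,3)`, `b'_v = (v,4)`, `t_v = (v,5)`. -/
abbrev GFirm (V : Type) : Type := Bool ⊕ (V × Fin 6)

/-- Contracts of the gadget network: for each vertex `v` the eight contracts
`s s_v = (v,0)`, `s_v a_v = (v,1)`, `s_v b_v = (v,2)`, `a_v a'_v = (v,3)`, `b_v b'_v = (v,4)`,
`a'_v t_v = (v,5)`, `b'_v t_v = (v,6)`, `t_v t = (v,7)`; and for each arc `uv` of the
digraph the two contracts `a'_u a_v` (tagged `false`) and `b'_u b_v` (tagged `true`). -/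
abbrev GContract (V : Type) (adj : V → V → Bool) : Type :=
  (V × Fin 8) ⊕ (({p : V × V // adj p.1 p.2 = true}) × Bool)

/-- Seller of each gadget contract. -/
def gSell {V : Type} (adj : V → V → Bool) : GContract V adj → GFirm V
  | Sum.inl (v, i) =>
      ![Sum.inl false, Sum.inr (v, 0), Sum.inr (v, 0), Sum.inr (v, 1), Sum.inr (v, 3),
        Sum.inr (v, 2), Sum.inr (v, 4), Sum.inr (v, 5)] i
  | Sum.inr (⟨(u, _), _⟩, false) => Sum.inr (u, 2)
  | Sum.inr (⟨(u, _), _⟩, true) => Sum.inr (u, 4)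

/-- Buyer of each gadget contract. -/
def gBuy {V : Type} (adj : V → V → Bool) : GContract V adj → GFirm V
  | Sum.inl (v, i) =>
      ![Sum.inr (v, 0), Sum.inr (v, 1), Sum.inr (v, 3), Sum.inr (v, 2), Sum.inr (v, 4),
        Sum.inr (v, 5), Sum.inr (v, 5), Sum.inl true] i
  | Sum.inr (⟨(_, v), _⟩, false) => Sum.inr (v, 1)
  | Sum.inr (⟨(_, v), _⟩, true) => Sum.inr (v, 3)

/-- The gadget trading network built from the digraph `adj`, with choice functions `C`. -/
def gadgetNet {V : Type} (adj : V → V → Bool)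
    (C : GFirm V → Finset (GContract V adj) → Finset (GContract V adj)) :
    TradingNetwork (GFirm V) (GContract V adj) :=
  ⟨gSell adj, gBuy adj, C⟩

/-- The preference restrictions of the reduction: each `s_v` prefers `s_v a_v` to `s_v b_v`;
each `t_v` prefers `b'_v t_v` to `a'_v t_v`; and every firm prefers its gadget (non-`Z`)
contracts to its arc (`Z`) contracts, on both sides. -/
structure GadgetPrefs {V : Type} [DecidableEq V] [Fintype V] (adj : V → V → Bool)
    (C : GFirm V → Finset (GContract V adj) → Finset (GContract V adj))
    (rkB rkS : GFirm V → GContract V adj → ℕ) : Prop where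
  sv_pref : ∀ v : V, rkS (Sum.inr (v, 0)) (Sum.inl (v, 1)) < rkS (Sum.inr (v, 0)) (Sum.inl (v, 2))
  tv_pref : ∀ v : V, rkB (Sum.inr (v, 5)) (Sum.inl (v, 6)) < rkB (Sum.inr (v, 5)) (Sum.inl (v, 5))
  nonZ_first_B : ∀ f : GFirm V, ∀ x ∈ (gadgetNet adj C).XB f, ∀ y ∈ (gadgetNet adj C).XB f,
    x.isLeft → y.isRight → rkB f x < rkB f y
  nonZ_first_S : ∀ f : GFirm V, ∀ x ∈ (gadgetNet adj C).XS f, ∀ y ∈ (gadgetNet adj C).XS f,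
    x.isLeft → y.isRight → rkS f x < rkS f y

/-- Whether a gadget contract belongs to the outcome `A(Q)` of the reduction. -/
def gOutcomeMem {V : Type} [DecidableEq V] (Q : Finset V) {adj : V → V → Bool} :
    GContract V adj → Bool
  | Sum.inl (v, i) =>
      if v ∈ Q then i = 0 ∨ i = 2 ∨ i = 4 ∨ i = 6 ∨ i = 7
      else i = 0 ∨ i = 1 ∨ i = 3 ∨ i = 5 ∨ i = 7
  | Sum.inr _ => false

/-- The outcome `A(Q)` of the reduction: for `v ∈ Q` the contracts
`{s s_v, s_v b_v, b_v b'_v, b'_v t_v, t_v t}`, and for `v ∉ Q` the contracts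
`{s s_v, s_v a_v, a_v a'_v, a'_v t_v, t_v t}`. -/
def gOutcome {V : Type} [DecidableEq V] [Fintype V] (adj : V → V → Bool) (Q : Finset V) :
    Finset (GContract V adj) :=
  Finset.univ.filter fun x => gOutcomeMem Q x = true

namespace TradingNetwork
variable {F X : Type} [DecidableEq F] [DecidableEq X] [Fintype X]

lemma mem_XB' {N : TradingNetwork F X} {f : F} {x : X} : x ∈ N.XB f ↔ N.buy x = f := by
  simp [XB]

lemma mem_XS' {N : TradingNetwork F X} {f : F} {x : X} : x ∈ N.XS f ↔ N.sell x = f := by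
  simp [XS]

lemma mem_own' {N : TradingNetwork F X} {f : F} {Y : Finset X} {x : X} :
    x ∈ N.own f Y ↔ x ∈ Y ∧ (N.sell x = f ∨ N.buy x = f) := by simp [own]

lemma own_inter_XB (N : TradingNetwork F X) (f : F) (Y : Finset X) :
    N.own f Y ∩ N.XB f = Y ∩ N.XB f := by
  ext x; simp only [mem_inter, mem_own', mem_XB']; tauto

lemma own_inter_XS (N : TradingNetwork F X) (f : F) (Y : Finset X) :
    N.own f Y ∩ N.XS f = Y ∩ N.XS f := by
  ext x; simp only [mem_inter, mem_own', mem_XS']; tauto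

lemma blockY_XB (N : TradingNetwork F X) (f : F) (A B : Finset X) :
    (N.own f A ∪ N.own f B) ∩ N.XB f = (A ∩ N.XB f) ∪ (B ∩ N.XB f) := by
  rw [union_inter_distrib_right, own_inter_XB, own_inter_XB]

lemma blockY_XS (N : TradingNetwork F X) (f : F) (A B : Finset X) :
    (N.own f A ∪ N.own f B) ∩ N.XS f = (A ∩ N.XS f) ∪ (B ∩ N.XS f) := by
  rw [union_inter_distrib_right, own_inter_XS, own_inter_XS]

/-- Flow conservation at a non-terminal firm of an acceptable outcome. -/
lemma flow_eq {N : TradingNetwork F X} {rkB rkS : F → X → ℕ} (hFB : N.FlowBased rkB rkS)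
    {f : F} (hf : ¬ N.Terminal f) {A : Finset X} (hA : N.C f (N.own f A) = N.own f A) :
    (A ∩ N.XB f).card = (A ∩ N.XS f).card := by
  obtain ⟨hB, hS⟩ := hFB.top_choice f hf (N.own f A)
  rw [hA, own_inter_XB, own_inter_XS] at hB hS
  have h1 := hB.2.1
  have h2 := hS.2.1
  omega

lemma IsTop.eq_of_card {r : X → ℕ} {Y S : Finset X} (h : IsTop r Y.card Y S) : S = Y :=
  Finset.eq_of_subset_of_card_le h.1 (le_of_eq h.2.1.symm)

lemma IsTop.mem_min {r : X → ℕ} {k : ℕ} {Y S : Finset X} {x : X} (h : IsTop r k Y S)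
    (hk : 1 ≤ k) (hx : x ∈ Y) (hmin : ∀ y ∈ Y, y ≠ x → r x < r y) : x ∈ S := by
  by_contra hxS
  obtain ⟨s, hs⟩ := Finset.card_pos.1 (h.2.1 ▸ hk : 0 < S.card)
  have h1 : r s < r x := h.2.2 s hs x hx hxS
  have h2 : r x < r s := hmin s (h.1 hs) (fun e => hxS (e ▸ hs))
  omega

/-- If the upstream side is no larger than the downstream side, all upstream
contracts are chosen. -/
lemma acceptB_all {N : TradingNetwork F X} {rkB rkS : F → X → ℕ} (hFB : N.FlowBased rkB rkS)
    {f : F} (hf : ¬ N.Terminal f) {Y : Finset X}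
    (h : (Y ∩ N.XB f).card ≤ (Y ∩ N.XS f).card) : Y ∩ N.XB f ⊆ N.C f Y := by
  have hB := (hFB.top_choice f hf Y).1
  rw [min_eq_left h] at hB
  rw [← hB.eq_of_card]
  exact inter_subset_left

lemma acceptS_all {N : TradingNetwork F X} {rkB rkS : F → X → ℕ} (hFB : N.FlowBased rkB rkS)
    {f : F} (hf : ¬ N.Terminal f) {Y : Finset X}
    (h : (Y ∩ N.XS f).card ≤ (Y ∩ N.XB f).card) : Y ∩ N.XS f ⊆ N.C f Y := by
  have hS := (hFB.top_choice f hf Y).2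
  rw [min_eq_right h] at hS
  rw [← hS.eq_of_card]
  exact inter_subset_left

lemma acceptB_min {N : TradingNetwork F X} {rkB rkS : F → X → ℕ} (hFB : N.FlowBased rkB rkS)
    {f : F} (hf : ¬ N.Terminal f) {Y : Finset X} {x : X}
    (hD : 1 ≤ (Y ∩ N.XS f).card) (hx : x ∈ Y ∩ N.XB f)
    (hmin : ∀ y ∈ Y ∩ N.XB f, y ≠ x → rkB f x < rkB f y) : x ∈ N.C f Y := by
  have hB := (hFB.top_choice f hf Y).1
  have hk : 1 ≤ min (Y ∩ N.XB f).card (Y ∩ N.XS f).card :=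
    le_min (Finset.card_pos.2 ⟨x, hx⟩) hD
  exact (mem_inter.1 (hB.mem_min hk hx hmin)).1

lemma acceptS_min {N : TradingNetwork F X} {rkB rkS : F → X → ℕ} (hFB : N.FlowBased rkB rkS)
    {f : F} (hf : ¬ N.Terminal f) {Y : Finset X} {x : X}
    (hD : 1 ≤ (Y ∩ N.XB f).card) (hx : x ∈ Y ∩ N.XS f)
    (hmin : ∀ y ∈ Y ∩ N.XS f, y ≠ x → rkS f x < rkS f y) : x ∈ N.C f Y := by
  have hS := (hFB.top_choice f hf Y).2
  have hk : 1 ≤ min (Y ∩ N.XB f).card (Y ∩ N.XS f).card :=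
    le_min hD (Finset.card_pos.2 ⟨x, hx⟩)
  exact (mem_inter.1 (hS.mem_min hk hx hmin)).1

/-- A terminal firm accepts any contracts alongside anything. -/
lemma terminal_acc {N : TradingNetwork F X} {rkB rkS : F → X → ℕ} (hFB : N.FlowBased rkB rkS)
    {f : F} (hf : N.Terminal f) (A B : Finset X) : N.AccAlongside A B f := by
  intro x hx
  rw [hFB.terminal_accepts f hf]
  rcases mem_own'.1 hx with ⟨h1, h2⟩
  exact mem_own'.2 ⟨mem_union_right _ hx, h2⟩

end TradingNetwork
set_option linter.unusedSectionVars false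

section Gadget
open TradingNetwork

variable {V : Type} [DecidableEq V] [Fintype V] {adj : V → V → Bool}
  {C : GFirm V → Finset (GContract V adj) → Finset (GContract V adj)}

@[simp] lemma gBuy_i0 (v : V) : gBuy adj (Sum.inl (v,0)) = Sum.inr (v,0) := rfl
@[simp] lemma gBuy_i1 (v : V) : gBuy adj (Sum.inl (v,1)) = Sum.inr (v,1) := rfl
@[simp] lemma gBuy_i2 (v : V) : gBuy adj (Sum.inl (v,2)) = Sum.inr (v,3) := rfl
@[simp] lemma gBuy_i3 (v : V) : gBuy adj (Sum.inl (v,3)) = Sum.inr (v,2) := rfl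
@[simp] lemma gBuy_i4 (v : V) : gBuy adj (Sum.inl (v,4)) = Sum.inr (v,4) := rfl
@[simp] lemma gBuy_i5 (v : V) : gBuy adj (Sum.inl (v,5)) = Sum.inr (v,5) := rfl
@[simp] lemma gBuy_i6 (v : V) : gBuy adj (Sum.inl (v,6)) = Sum.inr (v,5) := rfl
@[simp] lemma gBuy_i7 (v : V) : gBuy adj (Sum.inl (v,7)) = Sum.inl true := rfl
@[simp] lemma gSell_i0 (v : V) : gSell adj (Sum.inl (v,0)) = Sum.inl false := rfl
@[simp] lemma gSell_i1 (v : V) : gSell adj (Sum.inl (v,1)) = Sum.inr (v,0) := rfl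
@[simp] lemma gSell_i2 (v : V) : gSell adj (Sum.inl (v,2)) = Sum.inr (v,0) := rfl
@[simp] lemma gSell_i3 (v : V) : gSell adj (Sum.inl (v,3)) = Sum.inr (v,1) := rfl
@[simp] lemma gSell_i4 (v : V) : gSell adj (Sum.inl (v,4)) = Sum.inr (v,3) := rfl
@[simp] lemma gSell_i5 (v : V) : gSell adj (Sum.inl (v,5)) = Sum.inr (v,2) := rfl
@[simp] lemma gSell_i6 (v : V) : gSell adj (Sum.inl (v,6)) = Sum.inr (v,4) := rfl
@[simp] lemma gSell_i7 (v : V) : gSell adj (Sum.inl (v,7)) = Sum.inr (v,5) := rfl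
@[simp] lemma gBuy_arc (q : {p : V × V // adj p.1 p.2 = true}) (b : Bool) :
    gBuy adj (Sum.inr (q, b)) = Sum.inr (q.1.2, if b then 3 else 1) := by
  rcases q with ⟨⟨u, w⟩, h⟩; cases b <;> rfl
@[simp] lemma gSell_arc (q : {p : V × V // adj p.1 p.2 = true}) (b : Bool) :
    gSell adj (Sum.inr (q, b)) = Sum.inr (q.1.1, if b then 4 else 2) := by
  rcases q with ⟨⟨u, w⟩, h⟩; cases b <;> rfl

lemma gbuy0 {v : V} {x : GContract V adj} : gBuy adj x = Sum.inr (v, 0) ↔ x = Sum.inl (v, 0) := by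
  rcases x with ⟨w, i⟩ | ⟨q, b⟩
  · fin_cases i <;> simp
  · cases b <;> simp

lemma gbuy1 {v : V} {x : GContract V adj} : gBuy adj x = Sum.inr (v, 1) ↔
    x = Sum.inl (v, 1) ∨ ∃ q, q.1.2 = v ∧ x = Sum.inr (q, false) := by
  rcases x with ⟨w, i⟩ | ⟨q, b⟩
  · fin_cases i <;> simp
  · cases b <;> simp

lemma gbuy2 {v : V} {x : GContract V adj} : gBuy adj x = Sum.inr (v, 2) ↔ x = Sum.inl (v, 3) := by
  rcases x with ⟨w, i⟩ | ⟨q, b⟩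
  · fin_cases i <;> simp
  · cases b <;> simp

lemma gbuy3 {v : V} {x : GContract V adj} : gBuy adj x = Sum.inr (v, 3) ↔
    x = Sum.inl (v, 2) ∨ ∃ q, q.1.2 = v ∧ x = Sum.inr (q, true) := by
  rcases x with ⟨w, i⟩ | ⟨q, b⟩
  · fin_cases i <;> simp
  · cases b <;> simp

lemma gbuy4 {v : V} {x : GContract V adj} : gBuy adj x = Sum.inr (v, 4) ↔ x = Sum.inl (v, 4) := by
  rcases x with ⟨w, i⟩ | ⟨q, b⟩
  · fin_cases i <;> simp
  · cases b <;> simp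

lemma gbuy5 {v : V} {x : GContract V adj} : gBuy adj x = Sum.inr (v, 5) ↔
    x = Sum.inl (v, 5) ∨ x = Sum.inl (v, 6) := by
  rcases x with ⟨w, i⟩ | ⟨q, b⟩
  · fin_cases i <;> simp
  · cases b <;> simp

lemma gbuyt {x : GContract V adj} : gBuy adj x = Sum.inl true ↔ ∃ v, x = Sum.inl (v, 7) := by
  rcases x with ⟨w, i⟩ | ⟨q, b⟩
  · fin_cases i <;> simp
  · cases b <;> simp

lemma gbuys {x : GContract V adj} : ¬ gBuy adj x = Sum.inl false := by
  rcases x with ⟨w, i⟩ | ⟨q, b⟩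
  · fin_cases i <;> simp
  · cases b <;> simp

lemma gsell0 {v : V} {x : GContract V adj} : gSell adj x = Sum.inr (v, 0) ↔
    x = Sum.inl (v, 1) ∨ x = Sum.inl (v, 2) := by
  rcases x with ⟨w, i⟩ | ⟨q, b⟩
  · fin_cases i <;> simp
  · cases b <;> simp

lemma gsell1 {v : V} {x : GContract V adj} : gSell adj x = Sum.inr (v, 1) ↔ x = Sum.inl (v, 3) := by
  rcases x with ⟨w, i⟩ | ⟨q, b⟩
  · fin_cases i <;> simp
  · cases b <;> simp

lemma gsell2 {v : V} {x : GContract V adj} : gSell adj x = Sum.inr (v, 2) ↔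
    x = Sum.inl (v, 5) ∨ ∃ q, q.1.1 = v ∧ x = Sum.inr (q, false) := by
  rcases x with ⟨w, i⟩ | ⟨q, b⟩
  · fin_cases i <;> simp
  · cases b <;> simp

lemma gsell3 {v : V} {x : GContract V adj} : gSell adj x = Sum.inr (v, 3) ↔ x = Sum.inl (v, 4) := by
  rcases x with ⟨w, i⟩ | ⟨q, b⟩
  · fin_cases i <;> simp
  · cases b <;> simp

lemma gsell4 {v : V} {x : GContract V adj} : gSell adj x = Sum.inr (v, 4) ↔
    x = Sum.inl (v, 6) ∨ ∃ q, q.1.1 = v ∧ x = Sum.inr (q, true) := by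
  rcases x with ⟨w, i⟩ | ⟨q, b⟩
  · fin_cases i <;> simp
  · cases b <;> simp

lemma gsell5 {v : V} {x : GContract V adj} : gSell adj x = Sum.inr (v, 5) ↔ x = Sum.inl (v, 7) := by
  rcases x with ⟨w, i⟩ | ⟨q, b⟩
  · fin_cases i <;> simp
  · cases b <;> simp

lemma gsellt {x : GContract V adj} : ¬ gSell adj x = Sum.inl true := by
  rcases x with ⟨w, i⟩ | ⟨q, b⟩
  · fin_cases i <;> simp
  · cases b <;> simp

variable {rkB rkS : GFirm V → GContract V adj → ℕ}

@[simp] lemma gadget_buy : (gadgetNet adj C).buy = gBuy adj := rfl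
@[simp] lemma gadget_sell : (gadgetNet adj C).sell = gSell adj := rfl

lemma gNT (v : V) (i : Fin 6) : ¬ (gadgetNet adj C).Terminal (Sum.inr (v, i)) := by
  fin_cases i <;> rintro (h | h) <;> rw [Finset.eq_empty_iff_forall_notMem] at h
  exacts [h (Sum.inl (v,0)) (mem_XB'.2 rfl), h (Sum.inl (v,1)) (mem_XS'.2 rfl),
    h (Sum.inl (v,1)) (mem_XB'.2 rfl), h (Sum.inl (v,3)) (mem_XS'.2 rfl),
    h (Sum.inl (v,3)) (mem_XB'.2 rfl), h (Sum.inl (v,5)) (mem_XS'.2 rfl),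
    h (Sum.inl (v,2)) (mem_XB'.2 rfl), h (Sum.inl (v,4)) (mem_XS'.2 rfl),
    h (Sum.inl (v,4)) (mem_XB'.2 rfl), h (Sum.inl (v,6)) (mem_XS'.2 rfl),
    h (Sum.inl (v,5)) (mem_XB'.2 rfl), h (Sum.inl (v,7)) (mem_XS'.2 rfl)]

lemma gTs : (gadgetNet adj C).Terminal (Sum.inl false) := by
  left; rw [Finset.eq_empty_iff_forall_notMem]
  intro x hx; exact gbuys (mem_XB'.1 hx)

lemma gTt : (gadgetNet adj C).Terminal (Sum.inl true) := by
  right; rw [Finset.eq_empty_iff_forall_notMem]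
  intro x hx; exact gsellt (mem_XS'.1 hx)

lemma card_inter_singleton (A : Finset (GContract V adj)) (c : GContract V adj) :
    (A ∩ {c}).card = if c ∈ A then 1 else 0 := by
  split <;> rename_i h
  · rw [Finset.inter_singleton_of_mem h, Finset.card_singleton]
  · rw [Finset.inter_singleton_of_notMem h, Finset.card_empty]

variable {A : Finset (GContract V adj)}

-- intersections with the sides of each firm
lemma iXB0 (v : V) (Y : Finset (GContract V adj)) :
    Y ∩ (gadgetNet adj C).XB (Sum.inr (v,0)) = Y ∩ {Sum.inl (v,0)} := by
  ext x; simp [mem_XB', gbuy0]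
lemma iXS0 (v : V) (Y : Finset (GContract V adj)) :
    Y ∩ (gadgetNet adj C).XS (Sum.inr (v,0)) = Y ∩ {Sum.inl (v,1), Sum.inl (v,2)} := by
  ext x; simp [mem_XS', gsell0]
lemma iXS1 (v : V) (Y : Finset (GContract V adj)) :
    Y ∩ (gadgetNet adj C).XS (Sum.inr (v,1)) = Y ∩ {Sum.inl (v,3)} := by
  ext x; simp [mem_XS', gsell1]
lemma iXB2 (v : V) (Y : Finset (GContract V adj)) :
    Y ∩ (gadgetNet adj C).XB (Sum.inr (v,2)) = Y ∩ {Sum.inl (v,3)} := by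
  ext x; simp [mem_XB', gbuy2]
lemma iXS3 (v : V) (Y : Finset (GContract V adj)) :
    Y ∩ (gadgetNet adj C).XS (Sum.inr (v,3)) = Y ∩ {Sum.inl (v,4)} := by
  ext x; simp [mem_XS', gsell3]
lemma iXB4 (v : V) (Y : Finset (GContract V adj)) :
    Y ∩ (gadgetNet adj C).XB (Sum.inr (v,4)) = Y ∩ {Sum.inl (v,4)} := by
  ext x; simp [mem_XB', gbuy4]
lemma iXB5 (v : V) (Y : Finset (GContract V adj)) :
    Y ∩ (gadgetNet adj C).XB (Sum.inr (v,5)) = Y ∩ {Sum.inl (v,5), Sum.inl (v,6)} := by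
  ext x; simp [mem_XB', gbuy5]
lemma iXS5 (v : V) (Y : Finset (GContract V adj)) :
    Y ∩ (gadgetNet adj C).XS (Sum.inr (v,5)) = Y ∩ {Sum.inl (v,7)} := by
  ext x; simp [mem_XS', gsell5]

-- sides with no Z contracts present in Y
lemma iXB1 (v : V) {Y : Finset (GContract V adj)}
    (hZ : ∀ (q) (b : Bool), Sum.inr (q, b) ∉ Y) :
    Y ∩ (gadgetNet adj C).XB (Sum.inr (v,1)) = Y ∩ {Sum.inl (v,1)} := by
  ext x; simp only [mem_inter, mem_XB', gadget_buy, gbuy1, Finset.mem_singleton]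
  constructor
  · rintro ⟨hx, h | ⟨q, hq, rfl⟩⟩
    · exact ⟨hx, h⟩
    · exact absurd hx (hZ q false)
  · rintro ⟨hx, h⟩; exact ⟨hx, Or.inl h⟩
lemma iXS2 (v : V) {Y : Finset (GContract V adj)}
    (hZ : ∀ (q) (b : Bool), Sum.inr (q, b) ∉ Y) :
    Y ∩ (gadgetNet adj C).XS (Sum.inr (v,2)) = Y ∩ {Sum.inl (v,5)} := by
  ext x; simp only [mem_inter, mem_XS', gadget_sell, gsell2, Finset.mem_singleton]
  constructor
  · rintro ⟨hx, h | ⟨q, hq, rfl⟩⟩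
    · exact ⟨hx, h⟩
    · exact absurd hx (hZ q false)
  · rintro ⟨hx, h⟩; exact ⟨hx, Or.inl h⟩
lemma iXB3 (v : V) {Y : Finset (GContract V adj)}
    (hZ : ∀ (q) (b : Bool), Sum.inr (q, b) ∉ Y) :
    Y ∩ (gadgetNet adj C).XB (Sum.inr (v,3)) = Y ∩ {Sum.inl (v,2)} := by
  ext x; simp only [mem_inter, mem_XB', gadget_buy, gbuy3, Finset.mem_singleton]
  constructor
  · rintro ⟨hx, h | ⟨q, hq, rfl⟩⟩
    · exact ⟨hx, h⟩
    · exact absurd hx (hZ q true)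
  · rintro ⟨hx, h⟩; exact ⟨hx, Or.inl h⟩
lemma iXS4 (v : V) {Y : Finset (GContract V adj)}
    (hZ : ∀ (q) (b : Bool), Sum.inr (q, b) ∉ Y) :
    Y ∩ (gadgetNet adj C).XS (Sum.inr (v,4)) = Y ∩ {Sum.inl (v,6)} := by
  ext x; simp only [mem_inter, mem_XS', gadget_sell, gsell4, Finset.mem_singleton]
  constructor
  · rintro ⟨hx, h | ⟨q, hq, rfl⟩⟩
    · exact ⟨hx, h⟩
    · exact absurd hx (hZ q true)
  · rintro ⟨hx, h⟩; exact ⟨hx, Or.inl h⟩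

lemma pair_not_left {c d : GContract V adj} (h : c ∉ A) : A ∩ {c, d} = A ∩ {d} := by
  ext x
  simp only [mem_inter, Finset.mem_insert, Finset.mem_singleton]
  constructor
  · rintro ⟨hx, rfl | rfl⟩
    · exact absurd hx h
    · exact ⟨hx, rfl⟩
  · rintro ⟨hx, rfl⟩; exact ⟨hx, Or.inr rfl⟩

open TradingNetwork in
lemma accAll {F X : Type} [DecidableEq F] [DecidableEq X] [Fintype X]
    {N : TradingNetwork F X} {rkB rkS : F → X → ℕ} (hFB : N.FlowBased rkB rkS)
    {f : F} (hf : ¬ N.Terminal f) {A L : Finset X}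
    (h : ((N.own f A ∪ N.own f L) ∩ N.XB f).card = ((N.own f A ∪ N.own f L) ∩ N.XS f).card) :
    N.AccAlongside A L f := by
  intro y hy
  have h2 := mem_own'.1 hy
  have hyY : y ∈ N.own f A ∪ N.own f L := mem_union_right _ hy
  rcases h2.2 with h3 | h3
  · exact acceptS_all hFB hf (le_of_eq h.symm) (mem_inter.2 ⟨hyY, mem_XS'.2 h3⟩)
  · exact acceptB_all hFB hf (le_of_eq h) (mem_inter.2 ⟨hyY, mem_XB'.2 h3⟩)

section Part1
variable (hFB : (gadgetNet adj C).FlowBased rkB rkS)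
  (hpref : GadgetPrefs adj C rkB rkS)
  (hAcc : (gadgetNet adj C).Acceptable A)
  (hnoblock : ¬ ∃ l, (gadgetNet adj C).BlockingPathOrCycle A l)

include hFB hpref hAcc hnoblock in
lemma part1a (q : {p : V × V // adj p.1 p.2 = true}) : Sum.inr (q, false) ∉ A := by
  intro hz
  set v := q.1.2 with hv
  -- flow at a_v
  have hN1 := flow_eq hFB (gNT v 1) (hAcc _)
  rw [iXS1] at hN1
  have hzB : Sum.inr (q, false) ∈ A ∩ (gadgetNet adj C).XB (Sum.inr (v,1)) :=
    mem_inter.2 ⟨hz, mem_XB'.2 (by simp [hv])⟩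
  have hle : (A ∩ {(Sum.inl (v,3) : GContract V adj)}).card ≤ 1 := by
    rw [card_inter_singleton]; split <;> omega
  have hsing : A ∩ (gadgetNet adj C).XB (Sum.inr (v,1)) = {Sum.inr (q, false)} :=
    Finset.eq_singleton_iff_unique_mem.2 ⟨hzB, fun y hy =>
      Finset.card_le_one.mp (le_trans (le_of_eq hN1) hle) y hy _ hzB⟩
  have hc1 : Sum.inl (v,1) ∉ A := by
    intro h
    have : (Sum.inl (v,1) : GContract V adj) ∈ ({Sum.inr (q, false)} : Finset _) := by
      rw [← hsing]; exact mem_inter.2 ⟨h, mem_XB'.2 (by simp)⟩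
    simp at this
  have hc3 : Sum.inl (v,3) ∈ A := by
    by_contra h
    rw [hsing, card_inter_singleton, if_neg h] at hN1
    simp at hN1
  -- flow at s_v
  have hN0 := flow_eq hFB (gNT v 0) (hAcc _)
  rw [iXB0, iXS0, pair_not_left hc1] at hN0
  by_cases h0 : Sum.inl (v,0) ∈ A
  · -- s_v has flow through b; block with s_v a_v
    have hc2 : Sum.inl (v,2) ∈ A := by
      by_contra h
      rw [card_inter_singleton, card_inter_singleton, if_pos h0, if_neg h] at hN0
      simp at hN0
    apply hnoblock
    refine ⟨[Sum.inl (v,1)], ⟨Or.inl ⟨by simp, List.isChain_singleton _, by simp⟩, ?_, ?_⟩⟩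
    · simp [Finset.disjoint_left, hc1]
    · intro f hf
      obtain ⟨x, hx⟩ := hf
      have hx2 := mem_own'.1 hx
      have hx1 : x = Sum.inl (v,1) := by simpa using hx2.1
      subst hx1
      intro y hy
      have hy1 : y = Sum.inl (v,1) := by simpa using (mem_own'.1 hy).1
      subst hy1
      rcases hx2.2 with h3 | h3 <;> rw [← h3] <;> simp only [gadget_sell, gadget_buy, gSell_i1, gBuy_i1]
      · -- f = s_v
        apply acceptS_min hFB (gNT v 0)
        · refine Finset.card_pos.2 ⟨Sum.inl (v,0), mem_inter.2 ⟨?_, mem_XB'.2 (by simp)⟩⟩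
          exact mem_union_left _ (mem_own'.2 ⟨h0, Or.inr (by simp)⟩)
        · refine mem_inter.2 ⟨?_, mem_XS'.2 (by simp)⟩
          exact mem_union_right _ (mem_own'.2 ⟨by simp, Or.inl (by simp)⟩)
        · intro y hy hne
          have := mem_XS'.1 (mem_inter.1 hy).2
          rw [gadget_sell, gsell0] at this
          rcases this with h | h
          · exact absurd h hne
          · rw [h]; exact hpref.sv_pref v
      · -- f = a_v
        apply acceptB_min hFB (gNT v 1)
        · refine Finset.card_pos.2 ⟨Sum.inl (v,3), mem_inter.2 ⟨?_, mem_XS'.2 (by simp)⟩⟩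
          exact mem_union_left _ (mem_own'.2 ⟨hc3, Or.inl (by simp)⟩)
        · refine mem_inter.2 ⟨?_, mem_XB'.2 (by simp)⟩
          exact mem_union_right _ (mem_own'.2 ⟨by simp, Or.inr (by simp)⟩)
        · intro y hy hne
          have := mem_XB'.1 (mem_inter.1 hy).2
          rw [gadget_buy, gbuy1] at this
          rcases this with h | ⟨q', hq', rfl⟩
          · exact absurd h hne
          · exact hpref.nonZ_first_B _ _ (mem_XB'.2 (by simp)) _
              (mem_XB'.2 (by simp [hq'])) rfl rfl
  · -- s_v has no flow; block with [s s_v, s_v a_v]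
    have hc2 : Sum.inl (v,2) ∉ A := by
      intro h
      rw [card_inter_singleton, card_inter_singleton, if_neg h0, if_pos h] at hN0
      simp at hN0
    apply hnoblock
    refine ⟨[Sum.inl (v,0), Sum.inl (v,1)], ⟨Or.inl ⟨by simp, ?_, by simp⟩, ?_, ?_⟩⟩
    · simp [List.Chain', List.isChain_cons_cons]
    · rw [Finset.disjoint_left]
      intro x hx
      simp only [List.toFinset_cons, List.toFinset_nil, insert_empty_eq,
        Finset.mem_insert, Finset.mem_singleton] at hx
      rcases hx with rfl | rfl
      exacts [h0, hc1]
    · intro f hf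
      obtain ⟨x, hx⟩ := hf
      have hx2 := mem_own'.1 hx
      have hx1 : x = Sum.inl (v,0) ∨ x = Sum.inl (v,1) := by simpa using hx2.1
      have hL : ([Sum.inl (v,0), Sum.inl (v,1)] : List (GContract V adj)).toFinset
          = {Sum.inl (v,0), Sum.inl (v,1)} := by simp
      rcases hx1 with rfl | rfl
      · rcases hx2.2 with h3 | h3
        · -- f = s  (terminal)
          rw [← h3]; simp only [gadget_sell, gSell_i0]
          exact terminal_acc hFB gTs _ _
        · -- f = s_v
          rw [← h3]; simp only [gadget_buy, gBuy_i0]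
          apply accAll hFB (gNT v 0)
          rw [blockY_XB, blockY_XS, iXB0, iXB0, iXS0, iXS0, hL]
          rw [Finset.inter_singleton_of_notMem h0, pair_not_left hc1,
            Finset.inter_singleton_of_notMem hc2]
          have e1 : ({Sum.inl (v,0), Sum.inl (v,1)} : Finset (GContract V adj)) ∩ {Sum.inl (v,0)}
              = {Sum.inl (v,0)} := Finset.inter_singleton_of_mem (by simp)
          have e2 : ({Sum.inl (v,0), Sum.inl (v,1)} : Finset (GContract V adj))
              ∩ {Sum.inl (v,1), Sum.inl (v,2)} = {Sum.inl (v,1)} := by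
            ext x
            simp only [mem_inter, Finset.mem_insert, Finset.mem_singleton]
            constructor
            · rintro ⟨rfl | rfl, h⟩ <;> simp_all
            · rintro rfl; simp
          rw [e1, e2]
          simp
      · rcases hx2.2 with h3 | h3
        · -- f = s_v (seller of s_v a_v): same as above
          rw [← h3]; simp only [gadget_sell, gSell_i1]
          apply accAll hFB (gNT v 0)
          rw [blockY_XB, blockY_XS, iXB0, iXB0, iXS0, iXS0, hL]
          rw [Finset.inter_singleton_of_notMem h0, pair_not_left hc1,
            Finset.inter_singleton_of_notMem hc2]
          have e1 : ({Sum.inl (v,0), Sum.inl (v,1)} : Finset (GContract V adj)) ∩ {Sum.inl (v,0)}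
              = {Sum.inl (v,0)} := Finset.inter_singleton_of_mem (by simp)
          have e2 : ({Sum.inl (v,0), Sum.inl (v,1)} : Finset (GContract V adj))
              ∩ {Sum.inl (v,1), Sum.inl (v,2)} = {Sum.inl (v,1)} := by
            ext x
            simp only [mem_inter, Finset.mem_insert, Finset.mem_singleton]
            constructor
            · rintro ⟨rfl | rfl, h⟩ <;> simp_all
            · rintro rfl; simp
          rw [e1, e2]
          simp
        · -- f = a_v
          rw [← h3]; simp only [gadget_buy, gBuy_i1]
          intro y hy
          have hy2 := mem_own'.1 hy
          have hy1 : y = Sum.inl (v,0) ∨ y = Sum.inl (v,1) := by simpa using hy2.1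
          have hy3 : y = Sum.inl (v,1) := by
            rcases hy1 with rfl | rfl
            · rcases hy2.2 with h | h <;> simp at h
            · rfl
          subst hy3
          apply acceptB_min hFB (gNT v 1)
          · refine Finset.card_pos.2 ⟨Sum.inl (v,3), mem_inter.2 ⟨?_, mem_XS'.2 (by simp)⟩⟩
            exact mem_union_left _ (mem_own'.2 ⟨hc3, Or.inl (by simp)⟩)
          · exact mem_inter.2 ⟨mem_union_right _ hy, mem_XB'.2 (by simp)⟩
          · intro y hy hne
            have := mem_XB'.1 (mem_inter.1 hy).2
            rw [gadget_buy, gbuy1] at this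
            rcases this with h | ⟨q', hq', rfl⟩
            · exact absurd h hne
            · exact hpref.nonZ_first_B _ _ (mem_XB'.2 (by simp)) _
                (mem_XB'.2 (by simp [hq'])) rfl rfl

end Part1

lemma pair_not_right {c d : GContract V adj} {A : Finset (GContract V adj)} (h : d ∉ A) :
    A ∩ {c, d} = A ∩ {c} := by
  ext x
  simp only [mem_inter, Finset.mem_insert, Finset.mem_singleton]
  constructor
  · rintro ⟨hx, rfl | rfl⟩
    · exact ⟨hx, rfl⟩
    · exact absurd hx h
  · rintro ⟨hx, rfl⟩; exact ⟨hx, Or.inl rfl⟩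

section Part1b
variable (hFB : (gadgetNet adj C).FlowBased rkB rkS)
  (hpref : GadgetPrefs adj C rkB rkS)
  (hAcc : (gadgetNet adj C).Acceptable A)
  (hnoblock : ¬ ∃ l, (gadgetNet adj C).BlockingPathOrCycle A l)

include hFB hpref hAcc hnoblock in
lemma part1b (q : {p : V × V // adj p.1 p.2 = true}) : Sum.inr (q, true) ∉ A := by
  intro hz
  set u := q.1.1 with hu
  -- flow at b'_u
  have hN4 := flow_eq hFB (gNT u 4) (hAcc _)
  rw [iXB4] at hN4
  have hzS : Sum.inr (q, true) ∈ A ∩ (gadgetNet adj C).XS (Sum.inr (u,4)) :=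
    mem_inter.2 ⟨hz, mem_XS'.2 (by simp [hu])⟩
  have hle : (A ∩ {(Sum.inl (u,4) : GContract V adj)}).card ≤ 1 := by
    rw [card_inter_singleton]; split <;> omega
  have hsing : A ∩ (gadgetNet adj C).XS (Sum.inr (u,4)) = {Sum.inr (q, true)} :=
    Finset.eq_singleton_iff_unique_mem.2 ⟨hzS, fun y hy =>
      Finset.card_le_one.mp (le_trans (le_of_eq hN4.symm) hle) y hy _ hzS⟩
  have hc6 : Sum.inl (u,6) ∉ A := by
    intro h
    have : (Sum.inl (u,6) : GContract V adj) ∈ ({Sum.inr (q, true)} : Finset _) := by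
      rw [← hsing]; exact mem_inter.2 ⟨h, mem_XS'.2 (by simp)⟩
    simp at this
  have hc4 : Sum.inl (u,4) ∈ A := by
    by_contra h
    rw [hsing, card_inter_singleton, if_neg h] at hN4
    simp at hN4
  -- flow at t_u
  have hN5 := flow_eq hFB (gNT u 5) (hAcc _)
  rw [iXB5, iXS5, pair_not_right hc6] at hN5
  by_cases h7 : Sum.inl (u,7) ∈ A
  · -- t_u has flow through a; block with [b'_u t_u]
    have hc5 : Sum.inl (u,5) ∈ A := by
      by_contra h
      rw [card_inter_singleton, card_inter_singleton, if_pos h7, if_neg h] at hN5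
      simp at hN5
    apply hnoblock
    refine ⟨[Sum.inl (u,6)], ⟨Or.inl ⟨by simp, List.isChain_singleton _, by simp⟩, ?_, ?_⟩⟩
    · simp [Finset.disjoint_left, hc6]
    · intro f hf
      obtain ⟨x, hx⟩ := hf
      have hx2 := mem_own'.1 hx
      have hx1 : x = Sum.inl (u,6) := by simpa using hx2.1
      subst hx1
      intro y hy
      have hy1 : y = Sum.inl (u,6) := by simpa using (mem_own'.1 hy).1
      subst hy1
      rcases hx2.2 with h3 | h3 <;> rw [← h3] <;> simp only [gadget_sell, gadget_buy, gSell_i6, gBuy_i6]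
      · -- f = b'_u
        apply acceptS_min hFB (gNT u 4)
        · refine Finset.card_pos.2 ⟨Sum.inl (u,4), mem_inter.2 ⟨?_, mem_XB'.2 (by simp)⟩⟩
          exact mem_union_left _ (mem_own'.2 ⟨hc4, Or.inr (by simp)⟩)
        · refine mem_inter.2 ⟨?_, mem_XS'.2 (by simp)⟩
          exact mem_union_right _ (mem_own'.2 ⟨by simp, Or.inl (by simp)⟩)
        · intro y hy hne
          have := mem_XS'.1 (mem_inter.1 hy).2
          rw [gadget_sell, gsell4] at this
          rcases this with h | ⟨q', hq', rfl⟩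
          · exact absurd h hne
          · exact hpref.nonZ_first_S _ _ (mem_XS'.2 (by simp)) _
              (mem_XS'.2 (by simp [hq'])) rfl rfl
      · -- f = t_u
        apply acceptB_min hFB (gNT u 5)
        · refine Finset.card_pos.2 ⟨Sum.inl (u,7), mem_inter.2 ⟨?_, mem_XS'.2 (by simp)⟩⟩
          exact mem_union_left _ (mem_own'.2 ⟨h7, Or.inl (by simp)⟩)
        · refine mem_inter.2 ⟨?_, mem_XB'.2 (by simp)⟩
          exact mem_union_right _ (mem_own'.2 ⟨by simp, Or.inr (by simp)⟩)
        · intro y hy hne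
          have := mem_XB'.1 (mem_inter.1 hy).2
          rw [gadget_buy, gbuy5] at this
          rcases this with h | h
          · rw [h]; exact hpref.tv_pref u
          · exact absurd h hne
  · -- t_u has no flow; block with [b'_u t_u, t_u t]
    have hc5 : Sum.inl (u,5) ∉ A := by
      intro h
      rw [card_inter_singleton, card_inter_singleton, if_neg h7, if_pos h] at hN5
      simp at hN5
    apply hnoblock
    refine ⟨[Sum.inl (u,6), Sum.inl (u,7)], ⟨Or.inl ⟨by simp, ?_, by simp⟩, ?_, ?_⟩⟩
    · simp [List.Chain', List.isChain_cons_cons]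
    · rw [Finset.disjoint_left]
      intro x hx
      simp only [List.toFinset_cons, List.toFinset_nil, insert_empty_eq,
        Finset.mem_insert, Finset.mem_singleton] at hx
      rcases hx with rfl | rfl
      exacts [hc6, h7]
    · intro f hf
      obtain ⟨x, hx⟩ := hf
      have hx2 := mem_own'.1 hx
      have hx1 : x = Sum.inl (u,6) ∨ x = Sum.inl (u,7) := by simpa using hx2.1
      have hL : ([Sum.inl (u,6), Sum.inl (u,7)] : List (GContract V adj)).toFinset
          = {Sum.inl (u,6), Sum.inl (u,7)} := by simp
      have haccT : (gadgetNet adj C).AccAlongside A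
          ([Sum.inl (u,6), Sum.inl (u,7)] : List (GContract V adj)).toFinset (Sum.inr (u,5)) := by
        apply accAll hFB (gNT u 5)
        rw [blockY_XB, blockY_XS, iXB5, iXB5, iXS5, iXS5, hL]
        rw [pair_not_left hc5, Finset.inter_singleton_of_notMem hc6,
          Finset.inter_singleton_of_notMem h7]
        have e1 : ({Sum.inl (u,6), Sum.inl (u,7)} : Finset (GContract V adj))
            ∩ {Sum.inl (u,5), Sum.inl (u,6)} = {Sum.inl (u,6)} := by
          ext x
          simp only [mem_inter, Finset.mem_insert, Finset.mem_singleton]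
          constructor
          · rintro ⟨rfl | rfl, h⟩ <;> simp_all
          · rintro rfl; simp
        have e2 : ({Sum.inl (u,6), Sum.inl (u,7)} : Finset (GContract V adj)) ∩ {Sum.inl (u,7)}
            = {Sum.inl (u,7)} := Finset.inter_singleton_of_mem (by simp)
        rw [e1, e2]
        simp
      have haccB : (gadgetNet adj C).AccAlongside A
          ([Sum.inl (u,6), Sum.inl (u,7)] : List (GContract V adj)).toFinset (Sum.inr (u,4)) := by
        intro y hy
        have hy2 := mem_own'.1 hy
        have hy1 : y = Sum.inl (u,6) ∨ y = Sum.inl (u,7) := by simpa using hy2.1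
        have hy3 : y = Sum.inl (u,6) := by
          rcases hy1 with rfl | rfl
          · rfl
          · rcases hy2.2 with h | h <;> simp at h
        subst hy3
        apply acceptS_min hFB (gNT u 4)
        · refine Finset.card_pos.2 ⟨Sum.inl (u,4), mem_inter.2 ⟨?_, mem_XB'.2 (by simp)⟩⟩
          exact mem_union_left _ (mem_own'.2 ⟨hc4, Or.inr (by simp)⟩)
        · exact mem_inter.2 ⟨mem_union_right _ hy, mem_XS'.2 (by simp)⟩
        · intro y hy hne
          have := mem_XS'.1 (mem_inter.1 hy).2
          rw [gadget_sell, gsell4] at this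
          rcases this with h | ⟨q', hq', rfl⟩
          · exact absurd h hne
          · exact hpref.nonZ_first_S _ _ (mem_XS'.2 (by simp)) _
              (mem_XS'.2 (by simp [hq'])) rfl rfl
      rcases hx1 with rfl | rfl
      · rcases hx2.2 with h3 | h3
        · rw [← h3]; simp only [gadget_sell, gSell_i6]; exact haccB
        · rw [← h3]; simp only [gadget_buy, gBuy_i6]; exact haccT
      · rcases hx2.2 with h3 | h3
        · rw [← h3]; simp only [gadget_sell, gSell_i7]; exact haccT
        · rw [← h3]; simp only [gadget_buy, gBuy_i7]
          exact terminal_acc hFB gTt _ _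

end Part1b

section Sides
variable (hFB : (gadgetNet adj C).FlowBased rkB rkS)
  (hAcc : (gadgetNet adj C).Acceptable A)
  (hZ : ∀ (q) (b : Bool), (Sum.inr (q, b) : GContract V adj) ∉ A)

include hFB hAcc hZ in
lemma Qside (v : V) (h3 : Sum.inl (v,3) ∉ A) : Sum.inl (v,1) ∉ A ∧ Sum.inl (v,5) ∉ A := by
  have hN1 := flow_eq hFB (gNT v 1) (hAcc _)
  rw [iXB1 v hZ, iXS1] at hN1
  have hN2 := flow_eq hFB (gNT v 2) (hAcc _)
  rw [iXB2, iXS2 v hZ] at hN2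
  rw [card_inter_singleton, card_inter_singleton, if_neg h3] at hN1
  rw [card_inter_singleton, card_inter_singleton, if_neg h3] at hN2
  constructor
  · intro h; rw [if_pos h] at hN1; simp at hN1
  · intro h; rw [if_pos h] at hN2; simp at hN2

include hFB hAcc hZ in
lemma Rside (v : V) (h3 : Sum.inl (v,3) ∈ A) :
    Sum.inl (v,2) ∉ A ∧ Sum.inl (v,4) ∉ A ∧ Sum.inl (v,6) ∉ A := by
  have hN1 := flow_eq hFB (gNT v 1) (hAcc _)
  rw [iXB1 v hZ, iXS1] at hN1
  have hc1 : Sum.inl (v,1) ∈ A := by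
    by_contra h
    rw [card_inter_singleton, card_inter_singleton, if_neg h, if_pos h3] at hN1
    simp at hN1
  have hN0 := flow_eq hFB (gNT v 0) (hAcc _)
  rw [iXB0, iXS0] at hN0
  have hc2 : Sum.inl (v,2) ∉ A := by
    intro h
    have hsub : ({Sum.inl (v,1), Sum.inl (v,2)} : Finset (GContract V adj))
        ⊆ A ∩ {Sum.inl (v,1), Sum.inl (v,2)} := by
      intro x hx
      simp only [Finset.mem_insert, Finset.mem_singleton] at hx
      rcases hx with rfl | rfl
      · exact mem_inter.2 ⟨hc1, by simp⟩
      · exact mem_inter.2 ⟨h, by simp⟩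
    have h2 := Finset.card_le_card hsub
    rw [Finset.card_insert_of_notMem (by simp), Finset.card_singleton] at h2
    rw [card_inter_singleton] at hN0
    split at hN0 <;> omega
  have hN3 := flow_eq hFB (gNT v 3) (hAcc _)
  rw [iXB3 v hZ, iXS3] at hN3
  have hc4 : Sum.inl (v,4) ∉ A := by
    intro h
    rw [card_inter_singleton, card_inter_singleton, if_neg hc2, if_pos h] at hN3
    simp at hN3
  have hN4 := flow_eq hFB (gNT v 4) (hAcc _)
  rw [iXB4, iXS4 v hZ] at hN4
  have hc6 : Sum.inl (v,6) ∉ A := by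
    intro h
    rw [card_inter_singleton, card_inter_singleton, if_neg hc4, if_pos h] at hN4
    simp at hN4
  exact ⟨hc2, hc4, hc6⟩

end Sides

end Gadget

/-- The alternating list of chain and arc contracts along a list of arcs. -/
def cycL {V : Type} {adj : V → V → Bool} (t : Bool) :
    List {p : V × V // adj p.1 p.2 = true} → List (GContract V adj)
  | [] => []
  | q :: qs => Sum.inl (q.1.1, if t then 4 else 3) :: Sum.inr (q, t) :: cycL t qs

section Gadget2
open TradingNetwork

variable {V : Type} [Fintype V] [DecidableEq V] {adj : V → V → Bool}
  {C : GFirm V → Finset (GContract V adj) → Finset (GContract V adj)}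
  {rkB rkS : GFirm V → GContract V adj → ℕ}
  {A : Finset (GContract V adj)}

lemma cycL_ne_nil {t : Bool} {qs : List {p : V × V // adj p.1 p.2 = true}} (h : qs ≠ []) :
    cycL t qs ≠ [] := by
  cases qs with
  | nil => exact absurd rfl h
  | cons q qs => simp [cycL]

lemma mem_cycL {t : Bool} {qs : List {p : V × V // adj p.1 p.2 = true}} {x : GContract V adj} :
    x ∈ cycL t qs ↔ ∃ q ∈ qs, x = Sum.inl (q.1.1, if t then 4 else 3) ∨ x = Sum.inr (q, t) := by
  induction qs with
  | nil => simp [cycL]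
  | cons q qs ih =>
    simp only [cycL, List.mem_cons, ih, List.mem_cons]
    constructor
    · rintro (rfl | rfl | ⟨q', hq', h⟩)
      · exact ⟨q, Or.inl rfl, Or.inl rfl⟩
      · exact ⟨q, Or.inl rfl, Or.inr rfl⟩
      · exact ⟨q', Or.inr hq', h⟩
    · rintro ⟨q', rfl | hq', h⟩
      · rcases h with rfl | rfl
        · exact Or.inl rfl
        · exact Or.inr (Or.inl rfl)
      · exact Or.inr (Or.inr ⟨q', hq', h⟩)

lemma head_cycL {t : Bool} {qs : List {p : V × V // adj p.1 p.2 = true}} (h : qs ≠ []) :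
    (cycL t qs).head (cycL_ne_nil h) = Sum.inl ((qs.head h).1.1, if t then 4 else 3) := by
  cases qs with
  | nil => exact absurd rfl h
  | cons q qs => rfl

@[simp] lemma cycL_cons {t : Bool} {q : {p : V × V // adj p.1 p.2 = true}}
    {qs : List {p : V × V // adj p.1 p.2 = true}} :
    cycL t (q :: qs) =
      Sum.inl (q.1.1, if t then 4 else 3) :: Sum.inr (q, t) :: cycL t qs := rfl

lemma getLast_cycL {t : Bool} {qs : List {p : V × V // adj p.1 p.2 = true}} (h : qs ≠ []) :
    (cycL t qs).getLast (cycL_ne_nil h) = Sum.inr (qs.getLast h, t) := by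
  induction qs with
  | nil => exact absurd rfl h
  | cons q qs ih =>
    cases qs with
    | nil => rfl
    | cons q' qs' =>
      have h1 : (Sum.inr (q, t) :: cycL t (q' :: qs') : List (GContract V adj)) ≠ [] := by simp
      have h2 : (cycL t (q' :: qs') : List (GContract V adj)) ≠ [] := cycL_ne_nil (by simp)
      calc (cycL t (q :: q' :: qs')).getLast (cycL_ne_nil (by simp))
          = (Sum.inr (q, t) :: cycL t (q' :: qs')).getLast h1 := List.getLast_cons h1
        _ = (cycL t (q' :: qs')).getLast h2 := List.getLast_cons h2
        _ = Sum.inr ((q' :: qs').getLast (by simp), t) := ih (by simp)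
        _ = Sum.inr ((q :: q' :: qs').getLast (by simp), t) := by
              rw [List.getLast_cons (by simp : (q' :: qs' : List _) ≠ [])]

lemma chain'_cycL {t : Bool} {qs : List {p : V × V // adj p.1 p.2 = true}}
    (h : qs.Chain' (fun q q' => q.1.2 = q'.1.1)) :
    (cycL t qs).Chain' (fun x y => gBuy adj x = gSell adj y) := by
  induction qs with
  | nil => simp [cycL, List.Chain']
  | cons q qs ih =>
    cases qs with
    | nil =>
      simp only [cycL_cons]
      refine List.isChain_cons_cons.2 ⟨?_, List.isChain_singleton _⟩
      cases t <;> rfl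
    | cons q' qs' =>
      replace h := List.isChain_cons_cons.1 h
      simp only [cycL_cons]
      refine List.isChain_cons_cons.2 ⟨by cases t <;> rfl, ?_⟩
      refine List.isChain_cons_cons.2 ⟨?_, ?_⟩
      · show gBuy adj (Sum.inr (q, t)) = gSell adj (Sum.inl (q'.1.1, if t then 4 else 3))
        have := h.1
        cases t <;> simp [this]
      · exact ih h.2

lemma gSell_chain (t : Bool) (v : V) :
    gSell adj (Sum.inl (v, if t then (4:Fin 8) else 3)) = Sum.inr (v, if t then (3:Fin 6) else 1) := by
  cases t <;> rfl

lemma gBuy_chain (t : Bool) (v : V) :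
    gBuy adj (Sum.inl (v, if t then (4:Fin 8) else 3)) = Sum.inr (v, if t then (4:Fin 6) else 2) := by
  cases t <;> rfl

lemma mAB_ne (t : Bool) : (if t then (3:Fin 6) else 1) ≠ (if t then (4:Fin 6) else 2) := by
  cases t <;> decide

lemma mem_map_sell_cycL {t : Bool} {qs : List {p : V × V // adj p.1 p.2 = true}}
    {y : GFirm V} (hy : y ∈ (cycL t qs).map (gSell adj)) :
    ∃ q' ∈ qs, y = Sum.inr (q'.1.1, if t then (3:Fin 6) else 1)
      ∨ y = Sum.inr (q'.1.1, if t then (4:Fin 6) else 2) := by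
  rw [List.mem_map] at hy
  obtain ⟨x, hx, rfl⟩ := hy
  obtain ⟨q', hq', hx2⟩ := mem_cycL.1 hx
  rcases hx2 with rfl | rfl
  · exact ⟨q', hq', Or.inl (gSell_chain t _)⟩
  · exact ⟨q', hq', Or.inr (gSell_arc q' t)⟩

lemma sellers_nodup {t : Bool} {qs : List {p : V × V // adj p.1 p.2 = true}}
    (h : (qs.map (fun q => q.1.1)).Nodup) :
    ((cycL t qs).map (gSell adj)).Nodup := by
  induction qs with
  | nil => simp [cycL]
  | cons q qs ih =>
    rw [List.map_cons, List.nodup_cons] at h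
    simp only [cycL_cons, List.map_cons, List.nodup_cons, gSell_chain, gSell_arc]
    refine ⟨?_, ?_, ih h.2⟩
    · intro hc
      rcases List.mem_cons.1 hc with hc | hc
      · rw [Sum.inr.injEq, Prod.mk.injEq] at hc
        exact mAB_ne t hc.2
      · obtain ⟨q', hq', hc2⟩ := mem_map_sell_cycL hc
        rcases hc2 with hc2 | hc2
        · rw [Sum.inr.injEq, Prod.mk.injEq] at hc2
          exact h.1 (hc2.1 ▸ List.mem_map_of_mem hq')
        · rw [Sum.inr.injEq, Prod.mk.injEq] at hc2
          exact mAB_ne t hc2.2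
    · intro hc
      obtain ⟨q', hq', hc2⟩ := mem_map_sell_cycL hc
      rcases hc2 with hc2 | hc2
      · rw [Sum.inr.injEq, Prod.mk.injEq] at hc2
        exact mAB_ne t hc2.2.symm
      · rw [Sum.inr.injEq, Prod.mk.injEq] at hc2
        exact h.1 (hc2.1 ▸ List.mem_map_of_mem hq')

end Gadget2

section Gadget3
open TradingNetwork

variable {V : Type} [Fintype V] [DecidableEq V] {adj : V → V → Bool}
  {C : GFirm V → Finset (GContract V adj) → Finset (GContract V adj)}
  {rkB rkS : GFirm V → GContract V adj → ℕ}
  {A : Finset (GContract V adj)}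

lemma gbuyM1 (t : Bool) {v : V} {x : GContract V adj} :
    gBuy adj x = Sum.inr (v, if t then (3:Fin 6) else 1) ↔
      x = Sum.inl (v, if t then (2:Fin 8) else 1) ∨ ∃ q, q.1.2 = v ∧ x = Sum.inr (q, t) := by
  cases t
  · exact gbuy1
  · exact gbuy3

lemma gsellM1 (t : Bool) {v : V} {x : GContract V adj} :
    gSell adj x = Sum.inr (v, if t then (3:Fin 6) else 1) ↔
      x = Sum.inl (v, if t then (4:Fin 8) else 3) := by
  cases t
  · exact gsell1
  · exact gsell3

lemma gbuyM2 (t : Bool) {v : V} {x : GContract V adj} :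
    gBuy adj x = Sum.inr (v, if t then (4:Fin 6) else 2) ↔
      x = Sum.inl (v, if t then (4:Fin 8) else 3) := by
  cases t
  · exact gbuy2
  · exact gbuy4

lemma gsellM2 (t : Bool) {v : V} {x : GContract V adj} :
    gSell adj x = Sum.inr (v, if t then (4:Fin 6) else 2) ↔
      x = Sum.inl (v, if t then (6:Fin 8) else 5) ∨ ∃ q, q.1.1 = v ∧ x = Sum.inr (q, t) := by
  cases t
  · exact gsell2
  · exact gsell4

lemma iXBM1 (t : Bool) (v : V) {Y : Finset (GContract V adj)}
    (hZ : ∀ (q) (b : Bool), Sum.inr (q, b) ∉ Y) :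
    Y ∩ (gadgetNet adj C).XB (Sum.inr (v, if t then (3:Fin 6) else 1))
      = Y ∩ {Sum.inl (v, if t then (2:Fin 8) else 1)} := by
  cases t
  · exact iXB1 v hZ
  · exact iXB3 v hZ

lemma iXSM1 (t : Bool) (v : V) (Y : Finset (GContract V adj)) :
    Y ∩ (gadgetNet adj C).XS (Sum.inr (v, if t then (3:Fin 6) else 1))
      = Y ∩ {Sum.inl (v, if t then (4:Fin 8) else 3)} := by
  cases t
  · exact iXS1 v Y
  · exact iXS3 v Y

lemma iXBM2 (t : Bool) (v : V) (Y : Finset (GContract V adj)) :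
    Y ∩ (gadgetNet adj C).XB (Sum.inr (v, if t then (4:Fin 6) else 2))
      = Y ∩ {Sum.inl (v, if t then (4:Fin 8) else 3)} := by
  cases t
  · exact iXB2 v Y
  · exact iXB4 v Y

lemma iXSM2 (t : Bool) (v : V) {Y : Finset (GContract V adj)}
    (hZ : ∀ (q) (b : Bool), Sum.inr (q, b) ∉ Y) :
    Y ∩ (gadgetNet adj C).XS (Sum.inr (v, if t then (4:Fin 6) else 2))
      = Y ∩ {Sum.inl (v, if t then (6:Fin 8) else 5)} := by
  cases t
  · exact iXS2 v hZ
  · exact iXS4 v hZ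

lemma eidx_ne_czin (t : Bool) : (if t then (4:Fin 8) else 3) ≠ (if t then 2 else 1) := by
  cases t <;> decide

lemma eidx_ne_czout (t : Bool) : (if t then (4:Fin 8) else 3) ≠ (if t then 6 else 5) := by
  cases t <;> decide

variable (hFB : (gadgetNet adj C).FlowBased rkB rkS)
  (hZA : ∀ (q) (b : Bool), (Sum.inr (q, b) : GContract V adj) ∉ A)

include hFB hZA in
lemma cycBlock (t : Bool) {qs : List {p : V × V // adj p.1 p.2 = true}} (hq : qs ≠ [])
    (hhead : (qs.map (fun q => q.1.1)).Nodup)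
    (htail : (qs.map (fun q => q.1.2)).Nodup)
    (hch : qs.Chain' (fun q q' => q.1.2 = q'.1.1))
    (hcl : (qs.getLast hq).1.2 = (qs.head hq).1.1)
    (hin : ∀ q ∈ qs, ∃ q' ∈ qs, q'.1.2 = q.1.1)
    (hout : ∀ q ∈ qs, ∃ q' ∈ qs, q'.1.1 = q.1.2)
    (hcond : ∀ q ∈ qs, Sum.inl (q.1.1, if t then (2:Fin 8) else 1) ∉ A ∧
      Sum.inl (q.1.1, if t then (4:Fin 8) else 3) ∉ A ∧
      Sum.inl (q.1.1, if t then (6:Fin 8) else 5) ∉ A) :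
    (gadgetNet adj C).BlockingPathOrCycle A (cycL t qs) := by
  -- acceptance for the two kinds of involved firms
  have accI : ∀ q0 ∈ qs, (gadgetNet adj C).AccAlongside A (cycL t qs).toFinset
      (Sum.inr (q0.1.1, if t then (3:Fin 6) else 1)) := by
    intro q0 hq0
    obtain ⟨qin, hqin, hqv⟩ := hin q0 hq0
    apply accAll hFB (gNT _ _)
    rw [blockY_XB, blockY_XS]
    have hA1 : A ∩ (gadgetNet adj C).XB (Sum.inr (q0.1.1, if t then (3:Fin 6) else 1)) = ∅ := by
      rw [iXBM1 t _ hZA, Finset.inter_singleton_of_notMem (hcond q0 hq0).1]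
    have hA2 : A ∩ (gadgetNet adj C).XS (Sum.inr (q0.1.1, if t then (3:Fin 6) else 1)) = ∅ := by
      rw [iXSM1, Finset.inter_singleton_of_notMem (hcond q0 hq0).2.1]
    have hL1 : (cycL t qs).toFinset ∩ (gadgetNet adj C).XB
        (Sum.inr (q0.1.1, if t then (3:Fin 6) else 1)) = {Sum.inr (qin, t)} := by
      ext x
      simp only [mem_inter, List.mem_toFinset, mem_XB', gadget_buy, Finset.mem_singleton]
      constructor
      · rintro ⟨hxL, hxB⟩
        rcases (gbuyM1 t).1 hxB with rfl | ⟨q, hq2, rfl⟩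
        · obtain ⟨q', _, h | h⟩ := mem_cycL.1 hxL
          · rw [Sum.inl.injEq, Prod.mk.injEq] at h
            exact absurd h.2 (Ne.symm (eidx_ne_czin t))
          · simp at h
        · obtain ⟨q'', hq'', h | h⟩ := mem_cycL.1 hxL
          · simp at h
          · rw [Sum.inr.injEq, Prod.mk.injEq] at h
            have hqq : q = q'' := h.1
            subst hqq
            have : q = qin := List.inj_on_of_nodup_map htail hq'' hqin (hq2.trans hqv.symm)
            rw [this]
      · rintro rfl
        refine ⟨mem_cycL.2 ⟨qin, hqin, Or.inr rfl⟩, ?_⟩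
        rw [gBuy_arc, hqv]
    have hL2 : (cycL t qs).toFinset ∩ (gadgetNet adj C).XS
        (Sum.inr (q0.1.1, if t then (3:Fin 6) else 1))
        = {Sum.inl (q0.1.1, if t then (4:Fin 8) else 3)} := by
      ext x
      simp only [mem_inter, List.mem_toFinset, mem_XS', gadget_sell, Finset.mem_singleton]
      constructor
      · rintro ⟨hxL, hxS⟩
        exact (gsellM1 t).1 hxS
      · rintro rfl
        exact ⟨mem_cycL.2 ⟨q0, hq0, Or.inl rfl⟩, gSell_chain t _⟩
    rw [hA1, hA2, hL1, hL2]
    simp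
  have accII : ∀ q0 ∈ qs, (gadgetNet adj C).AccAlongside A (cycL t qs).toFinset
      (Sum.inr (q0.1.1, if t then (4:Fin 6) else 2)) := by
    intro q0 hq0
    apply accAll hFB (gNT _ _)
    rw [blockY_XB, blockY_XS]
    have hA1 : A ∩ (gadgetNet adj C).XB (Sum.inr (q0.1.1, if t then (4:Fin 6) else 2)) = ∅ := by
      rw [iXBM2, Finset.inter_singleton_of_notMem (hcond q0 hq0).2.1]
    have hA2 : A ∩ (gadgetNet adj C).XS (Sum.inr (q0.1.1, if t then (4:Fin 6) else 2)) = ∅ := by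
      rw [iXSM2 t _ hZA, Finset.inter_singleton_of_notMem (hcond q0 hq0).2.2]
    have hL1 : (cycL t qs).toFinset ∩ (gadgetNet adj C).XB
        (Sum.inr (q0.1.1, if t then (4:Fin 6) else 2))
        = {Sum.inl (q0.1.1, if t then (4:Fin 8) else 3)} := by
      ext x
      simp only [mem_inter, List.mem_toFinset, mem_XB', gadget_buy, Finset.mem_singleton]
      constructor
      · rintro ⟨hxL, hxB⟩
        exact (gbuyM2 t).1 hxB
      · rintro rfl
        exact ⟨mem_cycL.2 ⟨q0, hq0, Or.inl rfl⟩, gBuy_chain t _⟩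
    have hL2 : (cycL t qs).toFinset ∩ (gadgetNet adj C).XS
        (Sum.inr (q0.1.1, if t then (4:Fin 6) else 2)) = {Sum.inr (q0, t)} := by
      ext x
      simp only [mem_inter, List.mem_toFinset, mem_XS', gadget_sell, Finset.mem_singleton]
      constructor
      · rintro ⟨hxL, hxS⟩
        rcases (gsellM2 t).1 hxS with rfl | ⟨q, hq2, rfl⟩
        · obtain ⟨q', _, h | h⟩ := mem_cycL.1 hxL
          · rw [Sum.inl.injEq, Prod.mk.injEq] at h
            exact absurd h.2 (Ne.symm (eidx_ne_czout t))
          · simp at h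
        · obtain ⟨q'', hq'', h | h⟩ := mem_cycL.1 hxL
          · simp at h
          · rw [Sum.inr.injEq, Prod.mk.injEq] at h
            have hqq : q = q'' := h.1
            subst hqq
            have : q = q0 := List.inj_on_of_nodup_map hhead hq'' hq0 hq2
            rw [this]
      · rintro rfl
        exact ⟨mem_cycL.2 ⟨q0, hq0, Or.inr rfl⟩, gSell_arc q0 t⟩
    rw [hA1, hA2, hL1, hL2]
    simp
  refine ⟨Or.inr ⟨cycL_ne_nil hq, chain'_cycL hch, sellers_nodup hhead, ?_⟩, ?_, ?_⟩
  · rw [gadget_buy, gadget_sell, getLast_cycL hq, head_cycL hq, gBuy_arc, gSell_chain, hcl]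
  · rw [Finset.disjoint_left]
    intro x hx
    obtain ⟨q, hq2, h | h⟩ := mem_cycL.1 (List.mem_toFinset.1 hx)
    · exact h ▸ (hcond q hq2).2.1
    · exact h ▸ hZA q t
  · intro f hf
    obtain ⟨x, hx⟩ := hf
    have hx2 := mem_own'.1 hx
    obtain ⟨q, hq2, h | h⟩ := mem_cycL.1 (List.mem_toFinset.1 hx2.1)
    · subst h
      rcases hx2.2 with h3 | h3
      · rw [← h3, gadget_sell, gSell_chain]
        exact accI q hq2
      · rw [← h3, gadget_buy, gBuy_chain]
        exact accII q hq2
    · subst h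
      rcases hx2.2 with h3 | h3
      · rw [← h3, gadget_sell, gSell_arc]
        exact accII q hq2
      · rw [← h3, gadget_buy, gBuy_arc]
        obtain ⟨q', hq', hq'2⟩ := hout q hq2
        rw [← hq'2]
        exact accI q' hq'

end Gadget3

section Gadget4
open TradingNetwork

variable {V : Type} [Fintype V] [DecidableEq V] {adj : V → V → Bool}

lemma exists_qs (vs : List V) (hne : vs ≠ []) (hnd : vs.Nodup)
    (hch : vs.Chain' (fun u v => adj u v = true))
    (hcl : adj (vs.getLast hne) (vs.head hne) = true) :
    ∃ qs : List {p : V × V // adj p.1 p.2 = true}, ∃ hq : qs ≠ [],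
      (qs.map (fun q => q.1.1)).Nodup ∧ (qs.map (fun q => q.1.2)).Nodup ∧
      qs.Chain' (fun q q' => q.1.2 = q'.1.1) ∧
      (qs.getLast hq).1.2 = (qs.head hq).1.1 ∧
      (∀ q ∈ qs, ∃ q' ∈ qs, q'.1.2 = q.1.1) ∧
      (∀ q ∈ qs, ∃ q' ∈ qs, q'.1.1 = q.1.2) ∧
      (∀ q ∈ qs, q.1.1 ∈ vs) := by
  have hk : 0 < vs.length := List.length_pos_iff.2 hne
  have hrl : (vs.rotate 1).length = vs.length := List.length_rotate vs 1
  set ps := vs.zip (vs.rotate 1) with hps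
  have hpl : ps.length = vs.length := by
    rw [hps, List.length_zip, hrl, min_self]
  have hpsget : ∀ (i : ℕ) (h : i < ps.length),
      ps[i] = (vs[i]'(hpl ▸ h), vs[(i + 1) % vs.length]'(Nat.mod_lt _ hk)) := by
    intro i h
    have h1 : ps[i] = (vs[i]'(hpl ▸ h), (vs.rotate 1)[i]'(by omega)) := List.getElem_zip
    rw [h1, List.getElem_rotate vs 1 i _]
  have hadjm : ∀ p ∈ ps, adj p.1 p.2 = true := by
    intro p hp
    obtain ⟨i, h, hip⟩ := List.mem_iff_getElem.1 hp
    subst hip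
    rw [hpsget i h]
    by_cases hi : i + 1 < vs.length
    · have h3 : (i + 1) % vs.length = i + 1 := Nat.mod_eq_of_lt hi
      have h4 := List.isChain_iff_getElem.1 hch i (by omega)
      simp only [h3]
      exact h4
    · have hi2 : i + 1 = vs.length := by have := hpl ▸ h; omega
      have h3 : (i + 1) % vs.length = 0 := by rw [hi2, Nat.mod_self]
      have h4 : vs.getLast hne = vs[vs.length - 1] := List.getLast_eq_getElem hne
      have h5 : vs.head hne = vs[0] := List.head_eq_getElem_zero hne
      rw [h4, h5] at hcl
      have h6 : i = vs.length - 1 := by omega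
      simp only [h3]
      subst h6
      exact hcl
  set qs : List {p : V × V // adj p.1 p.2 = true} :=
    ps.attach.map (fun p => ⟨p.1, hadjm p.1 p.2⟩) with hqs
  have hql : qs.length = vs.length := by
    simp [hqs, hpl]
  have hq : qs ≠ [] := by
    intro hcon
    rw [hcon] at hql
    simp at hql
    omega
  refine ⟨qs, hq, ?_⟩
  have hqget : ∀ (i : ℕ) (h : i < qs.length), (qs[i]).1 = ps[i]'(by omega) := by
    intro i h
    simp only [hqs, List.getElem_map, List.getElem_attach]
  have hheads : qs.map (fun q => q.1.1) = vs := by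
    rw [hqs, List.map_map]
    have : ((fun q : {p : V × V // adj p.1 p.2 = true} => q.1.1) ∘
        (fun p : {x // x ∈ ps} => (⟨p.1, hadjm p.1 p.2⟩ : {p : V × V // adj p.1 p.2 = true})))
        = fun p : {x // x ∈ ps} => (↑p : V × V).1 := rfl
    rw [this, List.attach_map_val (l := ps) (f := Prod.fst), hps, List.map_fst_zip (le_of_eq hrl.symm)]
  have htails : qs.map (fun q => q.1.2) = vs.rotate 1 := by
    rw [hqs, List.map_map]
    have : ((fun q : {p : V × V // adj p.1 p.2 = true} => q.1.2) ∘
        (fun p : {x // x ∈ ps} => (⟨p.1, hadjm p.1 p.2⟩ : {p : V × V // adj p.1 p.2 = true})))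
        = fun p : {x // x ∈ ps} => (↑p : V × V).2 := rfl
    rw [this, List.attach_map_val (l := ps) (f := Prod.snd), hps, List.map_snd_zip (le_of_eq hrl)]
  refine ⟨hheads ▸ hnd, htails ▸ (List.nodup_rotate.2 hnd), ?_, ?_, ?_, ?_, ?_⟩
  · -- chain'
    refine List.isChain_iff_getElem.2 ?_
    intro i h
    rw [hqget i (by omega), hqget (i+1) (by omega), hpsget i (by omega),
      hpsget (i+1) (by omega)]
    have h3 : (i + 1) % vs.length = i + 1 := Nat.mod_eq_of_lt (by omega)
    simp only [h3]
  · -- closing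
    rw [List.getLast_eq_getElem, List.head_eq_getElem_zero]
    rw [hqget _ (by omega), hqget 0 (by omega), hpsget _ (by omega), hpsget 0 (by omega)]
    have h3 : (qs.length - 1 + 1) % vs.length = 0 := by
      rw [hql]
      have : vs.length - 1 + 1 = vs.length := by omega
      rw [this, Nat.mod_self]
    simp only [h3]
  · -- hin
    intro q hqm
    have h1 : q.1.1 ∈ vs := hheads ▸ List.mem_map_of_mem hqm
    have h2 : q.1.1 ∈ vs.rotate 1 := ((List.rotate_perm vs 1).mem_iff).2 h1
    rw [← htails] at h2
    obtain ⟨q', hq', he⟩ := List.mem_map.1 h2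
    exact ⟨q', hq', he⟩
  · -- hout
    intro q hqm
    have h1 : q.1.2 ∈ vs.rotate 1 := htails ▸ List.mem_map_of_mem hqm
    have h2 : q.1.2 ∈ vs := ((List.rotate_perm vs 1).mem_iff).1 h1
    rw [← hheads] at h2
    obtain ⟨q', hq', he⟩ := List.mem_map.1 h2
    exact ⟨q', hq', he⟩
  · intro q hqm
    exact hheads ▸ List.mem_map_of_mem hqm

end Gadget4

open TradingNetwork in
/-- If an acceptable outcome `A` of the gadget network admits no blocking
path and no blocking cycle, then `A` contains no arc (`Z`) contract and the vertex sets
`Q = {v : a_v a'_v ∉ A}` and `Qᶜ` are both acyclic in the digraph. -/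
theorem gadget_unblocked_partition {V : Type} [DecidableEq V] [Fintype V]
    (adj : V → V → Bool)
    (C : GFirm V → Finset (GContract V adj) → Finset (GContract V adj))
    (rkB rkS : GFirm V → GContract V adj → ℕ)
    (hN : (gadgetNet adj C).IsFlowNetwork rkB rkS)
    (hpref : GadgetPrefs adj C rkB rkS)
    (A : Finset (GContract V adj))
    (hAcc : (gadgetNet adj C).Acceptable A)
    (hnoblock : ¬ ∃ l, (gadgetNet adj C).BlockingPathOrCycle A l) :
    (∀ z : ({p : V × V // adj p.1 p.2 = true}) × Bool, Sum.inr z ∉ A) ∧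
    ¬ HasCycleIn adj (Finset.univ.filter fun v => Sum.inl (v, 3) ∉ A) ∧
    ¬ HasCycleIn adj (Finset.univ.filter fun v => Sum.inl (v, 3) ∉ A)ᶜ := by
  obtain ⟨hsb, hFB, hcard⟩ := hN
  have hZ : ∀ z : ({p : V × V // adj p.1 p.2 = true}) × Bool, Sum.inr z ∉ A := by
    rintro ⟨q, b⟩
    cases b
    · exact part1a hFB hpref hAcc hnoblock q
    · exact part1b hFB hpref hAcc hnoblock q
  have hZp : ∀ (q) (b : Bool), (Sum.inr (q, b) : GContract V adj) ∉ A := fun q b => hZ (q, b)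
  refine ⟨hZ, ?_, ?_⟩
  · rintro ⟨vs, hne, hnd, hU, hch, hcl⟩
    obtain ⟨qs, hq, hhead, htail, hch2, hcl2, hin, hout, hV⟩ := exists_qs vs hne hnd hch hcl
    apply hnoblock
    refine ⟨cycL false qs, cycBlock hFB hZp false hq hhead htail hch2 hcl2 hin hout ?_⟩
    intro q hq2
    have h3 : Sum.inl (q.1.1, 3) ∉ A := by
      have := hU q.1.1 (hV q hq2)
      simp only [Finset.mem_filter] at this
      exact this.2
    obtain ⟨h1, h5⟩ := Qside hFB hAcc hZp q.1.1 h3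
    exact ⟨h1, h3, h5⟩
  · rintro ⟨vs, hne, hnd, hU, hch, hcl⟩
    obtain ⟨qs, hq, hhead, htail, hch2, hcl2, hin, hout, hV⟩ := exists_qs vs hne hnd hch hcl
    apply hnoblock
    refine ⟨cycL true qs, cycBlock hFB hZp true hq hhead htail hch2 hcl2 hin hout ?_⟩
    intro q hq2
    have h3 : Sum.inl (q.1.1, 3) ∈ A := by
      have := hU q.1.1 (hV q hq2)
      simp only [Finset.mem_compl, Finset.mem_filter, Finset.mem_univ, true_and, not_not] at this
      exact this
    obtain ⟨h2, h4, h6⟩ := Rside hFB hAcc hZp q.1.1 h3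
    exact ⟨h2, h4, h6⟩
end

section
/- The choice function C_Π^f defined from a Partition instance Π = (a_1,...,a_k) with s = (1/2)Σa_i — which accepts all upstream contracts and accepts the downstream contract y if and only if the offered upstream contracts X satisfy Σ{a_i : x_i ∈ X} ≥ s — satisfies the irrelevance of rejected contracts condition and is fully substitutable. -/
open Finset

/-! ### The two-firm network built from a Partition-style instance -/

/-- Contracts of the two-firm network: `none` is the contract `y` (sold by firm `f` to
firm `g`), and `some i` is the contract `x_i` (sold by `g` to `f`). -/
abbrev PContract (k : ℕ) : Type := Option (Fin k)

/-- The two-firm trading network: firm `f` is `false`, firm `g` is `true`; their choice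
functions are `Cf'` and `Cg'` respectively. -/
def pnet {k : ℕ} (Cf' Cg' : Finset (PContract k) → Finset (PContract k)) :
    TradingNetwork Bool (PContract k) :=
  ⟨fun x => x.isSome, fun x => !x.isSome, fun g W => if g then Cg' W else Cf' W⟩

/-- The total `∑ i, a i  (= 2s)`. -/
def ptotal {k : ℕ} (a : Fin k → ℕ) : ℕ := ∑ i, a i

/-- The sum of the `a i` over the contracts `x_i` present in `W`. -/
def psum {k : ℕ} (a : Fin k → ℕ) (W : Finset (PContract k)) : ℕ :=
  ∑ i ∈ Finset.univ.filter (fun i => some i ∈ W), a i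

/-- The choice function `C_Π^f`: accept all offered upstream contracts `x_i`, and accept
the downstream contract `y` iff the offered `x_i` satisfy `∑ a_i ≥ s`. -/
def CPartF {k : ℕ} (a : Fin k → ℕ) (W : Finset (PContract k)) : Finset (PContract k) :=
  if ptotal a ≤ 2 * psum a W then W else W.erase none

/-- The choice function `C_Π^g`: if `y` is not offered, reject everything; if `y` is
offered, accept `y` together with those offered `x_i` whose prefix sum `∑ {a_j : x_j`
offered, `j ≤ i}` is at most `s`. -/
def CPartG {k : ℕ} (a : Fin k → ℕ) (W : Finset (PContract k)) : Finset (PContract k) :=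
  if none ∈ W then
    insert none (W.filter fun x => ∃ i : Fin k, x = some i ∧
      2 * (∑ j ∈ Finset.univ.filter (fun j => some j ∈ W ∧ j ≤ i), a j) ≤ ptotal a)
  else ∅


section Aux
variable {k : ℕ} (a : Fin k → ℕ)

lemma psum_mono {W W' : Finset (PContract k)} (h : W ⊆ W') : psum a W ≤ psum a W' := by
  apply Finset.sum_le_sum_of_subset
  intro i hi
  simp only [Finset.mem_filter, Finset.mem_univ, true_and] at *
  exact h hi

lemma psum_congr {W W' : Finset (PContract k)} (h : ∀ i : Fin k, some i ∈ W ↔ some i ∈ W') :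
    psum a W = psum a W' := by
  unfold psum
  congr 1
  apply Finset.filter_congr
  intro i _
  simpa using h i

lemma some_mem_CPartF {W : Finset (PContract k)} {i : Fin k} (h : some i ∈ W) :
    some i ∈ CPartF a W := by
  unfold CPartF
  split
  · exact h
  · exact Finset.mem_erase.2 ⟨by simp, h⟩

lemma none_mem_CPartF {W : Finset (PContract k)} :
    none ∈ CPartF a W ↔ none ∈ W ∧ ptotal a ≤ 2 * psum a W := by
  unfold CPartF
  split
  · next hle => simp [hle]
  · next hle => simp [hle]

lemma CPartF_subset (W : Finset (PContract k)) : CPartF a W ⊆ W := by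
  unfold CPartF
  split
  · exact Finset.Subset.refl _
  · exact Finset.erase_subset _ _

lemma mem_XB_false {x : PContract k} {Cf' Cg'} :
    x ∈ (pnet (Cf' : Finset (PContract k) → Finset (PContract k)) Cg').XB false ↔ x ≠ none := by
  simp [pnet, TradingNetwork.XB, Option.isSome_iff_ne_none]

lemma mem_XS_false {x : PContract k} {Cf' Cg'} :
    x ∈ (pnet (Cf' : Finset (PContract k) → Finset (PContract k)) Cg').XS false ↔ x = none := by
  simp only [pnet, TradingNetwork.XS, Finset.mem_filter, Finset.mem_univ, true_and]
  cases x <;> simp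

end Aux

/-- The choice function `C_Π^f` built from a Partition instance
`a_1 ≤ … ≤ a_k` of positive integers satisfies the irrelevance of rejected contracts
condition and is fully substitutable. -/


theorem CPartF_IRC_and_fullySubstitutable {k : ℕ} (a : Fin k → ℕ)
    (hpos : ∀ i, 0 < a i) (hmono : ∀ i j : Fin k, i ≤ j → a i ≤ a j) :
    (pnet (CPartF a) (CPartG a)).IRCAt false ∧
    (pnet (CPartF a) (CPartG a)).FullySubstitutableAt false := by
  have hC : ∀ W, (pnet (CPartF a) (CPartG a)).C false W = CPartF a W := fun _ => rfl
  set N := pnet (CPartF a) (CPartG a) with hN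
  constructor
  · -- IRC
    intro Y Z hCY hZY
    rw [hC Z, hC Y]
    rw [hC Y] at hCY
    by_cases h : ptotal a ≤ 2 * psum a Y
    · have hY : CPartF a Y = Y := if_pos h
      have : Z = Y := Finset.Subset.antisymm hZY (hY ▸ hCY)
      rw [this]
    · have hY : CPartF a Y = Y.erase none := if_neg h
      rw [hY] at hCY
      have hsum : psum a Z = psum a Y := by
        apply psum_congr
        intro i
        constructor
        · exact fun hi => hZY hi
        · intro hi
          exact hCY (Finset.mem_erase.2 ⟨by simp, hi⟩)
      have hZ : CPartF a Z = Z.erase none := if_neg (by rw [hsum]; exact h)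
      rw [hY, hZ]
      ext x
      simp only [Finset.mem_erase]
      constructor
      · exact fun ⟨hx, hxZ⟩ => ⟨hx, hZY hxZ⟩
      · intro ⟨hx, hxY⟩
        exact ⟨hx, hCY (Finset.mem_erase.2 ⟨hx, hxY⟩)⟩
  · -- Full substitutability
    -- RB is always empty
    have hRB : ∀ Y Z : Finset (PContract k), N.RB false Y Z = ∅ := by
      intro Y Z
      rw [Finset.eq_empty_iff_forall_notMem]
      intro x hx
      rw [TradingNetwork.RB, Finset.mem_sdiff] at hx
      obtain ⟨hx1, hx2⟩ := hx
      apply hx2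
      rw [TradingNetwork.CB, hC, Finset.mem_inter]
      refine ⟨?_, (Finset.mem_inter.1 hx1).2⟩
      have hxne : x ≠ none := mem_XB_false.1 (Finset.mem_inter.1 hx1).2
      obtain ⟨i, rfl⟩ := Option.ne_none_iff_exists'.1 hxne
      exact some_mem_CPartF a (Finset.mem_union_left _ hx1)
    -- the some-part of the offer set depends only on Y
    have hpsum : ∀ Y Z : Finset (PContract k),
        psum a ((Y ∩ N.XB false) ∪ (Z ∩ N.XS false)) = psum a (Y ∩ N.XB false) := by
      intro Y Z
      apply psum_congr
      intro i
      simp only [Finset.mem_union, or_iff_left_iff_imp]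
      intro hi
      exact absurd (mem_XS_false.1 (Finset.mem_inter.1 hi).2) (by simp)
    -- characterize RS
    have hRS : ∀ Z Y : Finset (PContract k), ∀ x, x ∈ N.RS false Z Y ↔
        x = none ∧ none ∈ Z ∧ ¬ ptotal a ≤ 2 * psum a (Y ∩ N.XB false) := by
      intro Z Y x
      constructor
      · intro hx
        rw [TradingNetwork.RS, Finset.mem_sdiff] at hx
        obtain ⟨hx1, hx2⟩ := hx
        obtain ⟨hxZ, hxS⟩ := Finset.mem_inter.1 hx1
        have hxnone := mem_XS_false.1 hxS
        subst hxnone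
        refine ⟨rfl, hxZ, fun hle => hx2 ?_⟩
        rw [TradingNetwork.CS, hC, Finset.mem_inter]
        exact ⟨(none_mem_CPartF a).2 ⟨Finset.mem_union_right _ hx1,
          by rw [hpsum]; exact hle⟩, hxS⟩
      · rintro ⟨rfl, hZ, hnle⟩
        rw [TradingNetwork.RS, Finset.mem_sdiff]
        have h1 : (none : PContract k) ∈ Z ∩ N.XS false :=
          Finset.mem_inter.2 ⟨hZ, mem_XS_false.2 rfl⟩
        refine ⟨h1, fun h2 => ?_⟩
        rw [TradingNetwork.CS, hC, Finset.mem_inter, none_mem_CPartF, hpsum] at h2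
        exact hnle h2.1.2
    intro Y' Y Z' Z hY hZ
    refine ⟨by simp [hRB], ?_, by simp [hRB], ?_⟩
    · intro x hx
      rw [hRS] at hx ⊢
      exact ⟨hx.1, hZ hx.2.1, hx.2.2⟩
    · intro x hx
      rw [hRS] at hx ⊢
      refine ⟨hx.1, hx.2.1, fun hle => hx.2.2 (le_trans hle ?_)⟩
      exact Nat.mul_le_mul_left 2 (psum_mono a (Finset.inter_subset_inter hY (le_refl _)))
end

section
/- The choice function C_Π^g — which accepts the upstream contract y whenever offered, and as a seller: with y offered and downstream offers X, accepts all of X if Σ{a_i : x_i ∈ X} ≤ s, and otherwise accepts X ∩ {x_1,...,x_t} for the unique t with Σ{a_i : x_i ∈ X, i ≤ t} ≤ s < Σ{a_i : x_i ∈ X, i ≤ t+1}; and rejects all downstream contracts when y is not offered — satisfies IRC and is fully substitutable. -/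
open Finset

section AuxProof

open Finset

variable {k : ℕ}

/-- Prefix sum of `a` over indices `j ≤ i` with `some j ∈ W`. -/
def pref (a : Fin k → ℕ) (W : Finset (PContract k)) (i : Fin k) : ℕ :=
  ∑ j ∈ Finset.univ.filter (fun j => some j ∈ W ∧ j ≤ i), a j

lemma pref_mono (a : Fin k → ℕ) {W' W : Finset (PContract k)} (h : W' ⊆ W) (i : Fin k) :
    pref a W' i ≤ pref a W i := by
  apply Finset.sum_le_sum_of_subset
  intro j hj
  simp only [Finset.mem_filter] at *
  exact ⟨hj.1, h hj.2.1, hj.2.2⟩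

lemma mem_CPartG (a : Fin k → ℕ) (W : Finset (PContract k)) (x : PContract k) :
    x ∈ CPartG a W ↔ none ∈ W ∧ (x = none ∨ ∃ i : Fin k, x = some i ∧ some i ∈ W ∧
      2 * pref a W i ≤ ptotal a) := by
  unfold CPartG
  split
  · rename_i hW
    simp only [Finset.mem_insert, Finset.mem_filter, pref]
    constructor
    · rintro (rfl | ⟨hxW, i, rfl, hi⟩)
      · exact ⟨hW, Or.inl rfl⟩
      · exact ⟨hW, Or.inr ⟨i, rfl, hxW, hi⟩⟩
    · rintro ⟨-, (rfl | ⟨i, rfl, hiW, hi⟩)⟩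
      · exact Or.inl rfl
      · exact Or.inr ⟨hiW, i, rfl, hi⟩
  · rename_i hW
    simp [hW]

lemma pnet_C (Cf' Cg' : Finset (PContract k) → Finset (PContract k)) (W : Finset (PContract k)) :
    (pnet Cf' Cg').C true W = Cg' W := rfl

lemma mem_pXB (Cf' Cg' : Finset (PContract k) → Finset (PContract k)) (x : PContract k) :
    x ∈ (pnet Cf' Cg').XB true ↔ x = none := by
  cases x <;> simp [TradingNetwork.XB, pnet]

lemma mem_pXS (Cf' Cg' : Finset (PContract k) → Finset (PContract k)) (x : PContract k) :
    x ∈ (pnet Cf' Cg').XS true ↔ ∃ i : Fin k, x = some i := by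
  cases x <;> simp [TradingNetwork.XS, pnet]

lemma none_mem_pW (Cf' Cg' : Finset (PContract k) → Finset (PContract k))
    (Y Z : Finset (PContract k)) :
    none ∈ (Y ∩ (pnet Cf' Cg').XB true) ∪ (Z ∩ (pnet Cf' Cg').XS true) ↔ none ∈ Y := by
  simp [Finset.mem_union, Finset.mem_inter, mem_pXB, mem_pXS]

lemma some_mem_pW (Cf' Cg' : Finset (PContract k) → Finset (PContract k))
    (Y Z : Finset (PContract k)) (i : Fin k) :
    some i ∈ (Y ∩ (pnet Cf' Cg').XB true) ∪ (Z ∩ (pnet Cf' Cg').XS true) ↔ some i ∈ Z := by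
  simp [Finset.mem_union, Finset.mem_inter, mem_pXB, mem_pXS]

lemma pref_pW (a : Fin k → ℕ) (Cf' Cg' : Finset (PContract k) → Finset (PContract k))
    (Y Z : Finset (PContract k)) (i : Fin k) :
    pref a ((Y ∩ (pnet Cf' Cg').XB true) ∪ (Z ∩ (pnet Cf' Cg').XS true)) i = pref a Z i := by
  unfold pref
  apply Finset.sum_congr _ (fun _ _ => rfl)
  apply Finset.filter_congr
  intro j _
  simp [mem_pXB, mem_pXS]

lemma RB_empty (a : Fin k → ℕ) (Y Z : Finset (PContract k)) :
    (pnet (CPartF a) (CPartG a)).RB true Y Z = ∅ := by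
  ext x
  simp only [Finset.notMem_empty, iff_false]
  intro hx
  simp only [TradingNetwork.RB, TradingNetwork.CB, Finset.mem_sdiff, Finset.mem_inter] at hx
  obtain ⟨⟨hxY, hxB⟩, hrej⟩ := hx
  rw [mem_pXB] at hxB
  subst hxB
  exact hrej ⟨(mem_CPartG a _ _).2 ⟨(none_mem_pW _ _ _ _).2 hxY, Or.inl rfl⟩,
    (mem_pXB _ _ _).2 rfl⟩

lemma mem_RS (a : Fin k → ℕ) (Y Z : Finset (PContract k)) (i : Fin k) :
    some i ∈ (pnet (CPartF a) (CPartG a)).RS true Z Y ↔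
      some i ∈ Z ∧ ¬(none ∈ Y ∧ 2 * pref a Z i ≤ ptotal a) := by
  simp only [TradingNetwork.RS, TradingNetwork.CS, Finset.mem_sdiff, Finset.mem_inter,
    mem_pXS, pnet_C, mem_CPartG, none_mem_pW, some_mem_pW, pref_pW]
  constructor
  · rintro ⟨⟨hiZ, -⟩, hrej⟩
    refine ⟨hiZ, fun ⟨hY, hpref⟩ => hrej ⟨⟨hY, Or.inr ⟨i, rfl, hiZ, hpref⟩⟩, ⟨i, rfl⟩⟩⟩
  · rintro ⟨hiZ, hrej⟩
    refine ⟨⟨hiZ, ⟨i, rfl⟩⟩, ?_⟩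
    rintro ⟨⟨hY, (h | ⟨j, hj, -, hpref⟩)⟩, -⟩
    · exact Option.some_ne_none _ h
    · cases Option.some_injective _ hj.symm
      exact hrej ⟨hY, hpref⟩

lemma RS_some (a : Fin k → ℕ) (Y Z : Finset (PContract k)) (x : PContract k)
    (hx : x ∈ (pnet (CPartF a) (CPartG a)).RS true Z Y) : ∃ i : Fin k, x = some i := by
  simp only [TradingNetwork.RS, Finset.mem_sdiff, Finset.mem_inter, mem_pXS] at hx
  exact hx.1.2

end AuxProof

/-- The choice function `C_Π^g` built from a Partition instance
`a_1 ≤ … ≤ a_k` of positive integers satisfies the irrelevance of rejected contracts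
condition and is fully substitutable. -/
theorem CPartG_IRC_and_fullySubstitutable {k : ℕ} (a : Fin k → ℕ)
    (hpos : ∀ i, 0 < a i) (hmono : ∀ i j : Fin k, i ≤ j → a i ≤ a j) :
    (pnet (CPartF a) (CPartG a)).IRCAt true ∧
    (pnet (CPartF a) (CPartG a)).FullySubstitutableAt true := by
  have hC : ∀ W : Finset (PContract k), (pnet (CPartF a) (CPartG a)).C true W = CPartG a W :=
    fun W => rfl
  constructor
  · -- IRC
    intro Y Z hCZ hZY
    rw [hC, hC] at *
    by_cases hy : none ∈ Y
    · have hyZ : none ∈ Z := hCZ ((mem_CPartG a Y none).2 ⟨hy, Or.inl rfl⟩)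
      ext x
      rw [mem_CPartG, mem_CPartG]
      constructor
      · rintro ⟨-, (rfl | ⟨i, rfl, hiZ, hprefZ⟩)⟩
        · exact ⟨hy, Or.inl rfl⟩
        refine ⟨hy, Or.inr ⟨i, rfl, hZY hiZ, ?_⟩⟩
        by_contra hrej
        push_neg at hrej
        -- minimal rejected index m ≤ i in Y
        set S : Finset (Fin k) :=
          Finset.univ.filter (fun j => some j ∈ Y ∧ j ≤ i ∧ ptotal a < 2 * pref a Y j) with hS
        have hiS : i ∈ S := by
          simp only [hS, Finset.mem_filter, Finset.mem_univ, true_and]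
          exact ⟨hZY hiZ, le_refl i, hrej⟩
        have hSne : S.Nonempty := ⟨i, hiS⟩
        set m := S.min' hSne with hm
        have hmS : m ∈ S := S.min'_mem hSne
        simp only [hS, Finset.mem_filter, Finset.mem_univ, true_and] at hmS
        obtain ⟨hmY, hmi, hmrej⟩ := hmS
        set Acc : Finset (Fin k) :=
          Finset.univ.filter (fun j => some j ∈ Y ∧ j ≤ i ∧ 2 * pref a Y j ≤ ptotal a) with hAcc
        have hmA : m ∉ Acc := by
          simp only [hAcc, Finset.mem_filter, Finset.mem_univ, true_and]
          rintro ⟨-, -, h⟩; omega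
        have hiA : i ∉ Acc := by
          simp only [hAcc, Finset.mem_filter, Finset.mem_univ, true_and]
          rintro ⟨-, -, h⟩; omega
        have step1 : pref a Y m ≤ a m + ∑ j ∈ Acc, a j := by
          have hsub : Finset.univ.filter (fun j => some j ∈ Y ∧ j ≤ m) ⊆ insert m Acc := by
            intro j hj
            simp only [Finset.mem_filter, Finset.mem_univ, true_and] at hj
            obtain ⟨hjY, hjm⟩ := hj
            rcases eq_or_lt_of_le hjm with rfl | hlt
            · exact Finset.mem_insert_self _ _
            · apply Finset.mem_insert_of_mem
              simp only [hAcc, Finset.mem_filter, Finset.mem_univ, true_and]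
              refine ⟨hjY, le_trans (le_of_lt hlt) hmi, ?_⟩
              by_contra hjr
              push_neg at hjr
              have : j ∈ S := by
                simp only [hS, Finset.mem_filter, Finset.mem_univ, true_and]
                exact ⟨hjY, le_trans (le_of_lt hlt) hmi, hjr⟩
              exact absurd (S.min'_le j this) (not_le.2 hlt)
          calc pref a Y m ≤ ∑ j ∈ insert m Acc, a j :=
                Finset.sum_le_sum_of_subset hsub
            _ = a m + ∑ j ∈ Acc, a j := Finset.sum_insert hmA
        have step2 : a i + ∑ j ∈ Acc, a j ≤ pref a Z i := by
          have hsub : insert i Acc ⊆ Finset.univ.filter (fun j => some j ∈ Z ∧ j ≤ i) := by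
            intro j hj
            rcases Finset.mem_insert.1 hj with rfl | hj
            · simp only [Finset.mem_filter, Finset.mem_univ, true_and]
              exact ⟨hiZ, le_refl j⟩
            · simp only [hAcc, Finset.mem_filter, Finset.mem_univ, true_and] at hj
              obtain ⟨hjY, hji, hjacc⟩ := hj
              simp only [Finset.mem_filter, Finset.mem_univ, true_and]
              exact ⟨hCZ ((mem_CPartG a Y _).2 ⟨hy, Or.inr ⟨j, rfl, hjY, hjacc⟩⟩), hji⟩
          calc a i + ∑ j ∈ Acc, a j = ∑ j ∈ insert i Acc, a j := (Finset.sum_insert hiA).symm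
            _ ≤ pref a Z i := Finset.sum_le_sum_of_subset hsub
        have hai : a m ≤ a i := hmono m i hmi
        omega
      · rintro ⟨-, (rfl | ⟨i, rfl, hiY, hprefY⟩)⟩
        · exact ⟨hyZ, Or.inl rfl⟩
        have hiZ : some i ∈ Z :=
          hCZ ((mem_CPartG a Y _).2 ⟨hy, Or.inr ⟨i, rfl, hiY, hprefY⟩⟩)
        exact ⟨hyZ, Or.inr ⟨i, rfl, hiZ,
          le_trans (Nat.mul_le_mul_left 2 (pref_mono a hZY i)) hprefY⟩⟩
    · have hyZ : none ∉ Z := fun h => hy (hZY h)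
      ext x
      rw [mem_CPartG, mem_CPartG]
      simp [hy, hyZ]
  · -- full substitutability
    intro Y' Y Z' Z hY hZ
    refine ⟨?_, ?_, ?_, ?_⟩
    · rw [RB_empty]; exact Finset.empty_subset _
    · intro x hx
      obtain ⟨i, rfl⟩ := RS_some a Y Z' x hx
      rw [mem_RS] at hx ⊢
      obtain ⟨hiZ', hrej⟩ := hx
      refine ⟨hZ hiZ', fun ⟨hY0, hpref⟩ => hrej ⟨hY0,
        le_trans (Nat.mul_le_mul_left 2 (pref_mono a hZ i)) hpref⟩⟩
    · rw [RB_empty]; exact Finset.empty_subset _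
    · intro x hx
      obtain ⟨i, rfl⟩ := RS_some a Y Z x hx
      rw [mem_RS] at hx ⊢
      obtain ⟨hiZ, hrej⟩ := hx
      exact ⟨hiZ, fun ⟨hY0, hpref⟩ => hrej ⟨hY hY0, hpref⟩⟩
end

section
/- In the two-firm network with contracts y and x_1,...,x_{2n}, choice function C^g as defined, and f's choice function known to be either C_0^f or C_I^f for some unknown n-element subset I of {1,...,2n}, deciding whether the empty outcome is stable requires, in the worst case, at least binomial(2n, n) oracle calls to f's choice function. -/
open Finset

/-! ### The oracle network -/

/-- The choice function `C_0^f` on contracts `y, x_1, …, x_{2n}`: accept all upstream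
contracts `x_i`, and accept `y` iff at least `n+1` contracts `x_i` are offered. -/
def C0f (n : ℕ) (W : Finset (PContract (2 * n))) : Finset (PContract (2 * n)) :=
  if n + 1 ≤ (W.erase none).card then W else W.erase none

/-- The choice function `C_I^f` for an `n`-element set `I`: accept all upstream contracts,
and accept `y` iff at least `n+1` contracts `x_i` are offered or the offered upstream set
is exactly `X_I`. -/
def CIf (n : ℕ) (I : Finset (Fin (2 * n))) (W : Finset (PContract (2 * n))) :
    Finset (PContract (2 * n)) :=
  if n + 1 ≤ (W.erase none).card ∨ W.erase none = I.image some then W else W.erase none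

/-- The choice function `C^g` of the oracle network (the choice function `C_Π^g` of the
Partition instance `(1,1,…,1)` of length `2n`). -/
def CgOracle (n : ℕ) : Finset (PContract (2 * n)) → Finset (PContract (2 * n)) :=
  CPartG fun _ => 1

lemma pnet_own {k : ℕ} (Cf' Cg' : Finset (PContract k) → Finset (PContract k))
    (b : Bool) (Y : Finset (PContract k)) : (pnet Cf' Cg').own b Y = Y := by
  unfold TradingNetwork.own pnet
  apply Finset.filter_true_of_mem
  intro x _
  cases x <;> cases b <;> simp

lemma none_notMem_image_some {k : ℕ} (I : Finset (Fin k)) :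
    (none : PContract k) ∉ I.image some := by simp

lemma ptotal_one (n : ℕ) : ptotal (fun _ : Fin (2 * n) => 1) = 2 * n := by
  simp [ptotal]

/-- Agreement of `CIf` and `C0f` except on the single distinguishing query. -/
lemma cif_eq_c0f {n : ℕ} (I : Finset (Fin (2 * n))) (W : Finset (PContract (2 * n)))
    (h : W ≠ insert none (I.image some)) : CIf n I W = C0f n W := by
  unfold CIf C0f
  by_cases hc : n + 1 ≤ (W.erase none).card
  · rw [if_pos (Or.inl hc), if_pos hc]
  · by_cases he : W.erase none = I.image some
    · rw [if_pos (Or.inr he), if_neg hc]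
      by_cases hn : none ∈ W
      · exact absurd ((Finset.insert_erase hn).symm.trans (by rw [he])) h
      · rw [Finset.erase_eq_of_notMem hn]
    · rw [if_neg (by tauto), if_neg hc]

lemma exists_good_I (n : ℕ) (queries : Finset (Finset (PContract (2 * n))))
    (hq : queries.card < Nat.choose (2 * n) n) :
    ∃ I : Finset (Fin (2 * n)), I.card = n ∧ ∀ W ∈ queries, CIf n I W = C0f n W := by
  by_contra h
  push_neg at h
  have key : ∀ I ∈ Finset.powersetCard n (univ : Finset (Fin (2 * n))),
      (fun I : Finset (Fin (2 * n)) => insert none (I.image some)) I ∈ queries := by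
    intro I hI
    rw [Finset.mem_powersetCard] at hI
    obtain ⟨W, hWq, hne⟩ := h I hI.2
    by_cases hW : W = insert none (I.image some)
    · rwa [hW] at hWq
    · exact absurd (cif_eq_c0f I W hW) hne
  have hinj : Set.InjOn (fun I : Finset (Fin (2 * n)) => insert none (I.image some))
      (Finset.powersetCard n (univ : Finset (Fin (2 * n)))) := by
    intro I₁ _ I₂ _ h12
    simp only at h12
    have := congrArg (Finset.erase · none) h12
    simp only [Finset.erase_insert (none_notMem_image_some _),
      Finset.erase_insert (none_notMem_image_some _)] at this
    exact Finset.image_injective (Option.some_injective _) this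
  have := Finset.card_le_card_of_injOn _ key hinj
  rw [Finset.card_powersetCard, Finset.card_univ, Fintype.card_fin] at this
  omega

lemma c0f_stable (n : ℕ) : (pnet (C0f n) (CgOracle n)).Stable ∅ := by
  constructor
  · intro f
    rw [pnet_own]
    cases f <;> simp [pnet, C0f, CgOracle, CPartG]
  · rintro ⟨Z, hne, -, hblock⟩
    have hinv : ∀ b : Bool, (pnet (C0f n) (CgOracle n)).Involved Z b := by
      intro b
      unfold TradingNetwork.Involved
      rwa [pnet_own]
    have hf := hblock false (hinv false)
    have hg := hblock true (hinv true)
    unfold TradingNetwork.AccAlongside at hf hg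
    simp only [pnet_own, Finset.empty_union] at hf hg
    simp only [pnet, Bool.false_eq_true, if_false, if_true] at hf hg
    -- g's side forces `none ∈ Z`
    by_cases hy : none ∈ Z
    · -- f's side forces many upstream contracts
      have hcard : n + 1 ≤ (Z.erase none).card := by
        by_contra hcard
        unfold C0f at hf
        rw [if_neg hcard] at hf
        exact Finset.notMem_erase none Z (hf hy)
      set T := univ.filter (fun j : Fin (2 * n) => some j ∈ Z) with hT
      have memT : ∀ j, j ∈ T ↔ some j ∈ Z := by
        intro j; rw [hT]; simp
      have hTcard : n + 1 ≤ T.card := by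
        have hsub : Z.erase none ⊆ T.image some := by
          intro x hx
          rw [Finset.mem_erase] at hx
          match x, hx with
          | some j, ⟨_, hj⟩ =>
            exact Finset.mem_image_of_mem some ((memT j).mpr hj)
        calc n + 1 ≤ (Z.erase none).card := hcard
          _ ≤ (T.image some).card := Finset.card_le_card hsub
          _ ≤ T.card := Finset.card_image_le
      have hTne : T.Nonempty := Finset.card_pos.mp (by omega)
      set i := T.max' hTne with hi
      have hiZ : some i ∈ Z := (memT i).mp (T.max'_mem hTne)
      have := hg hiZ
      unfold CgOracle CPartG at this
      rw [if_pos hy] at this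
      rcases Finset.mem_insert.mp this with h1 | h1
      · exact (Option.some_ne_none i) h1
      · obtain ⟨-, i', hii', hle⟩ := Finset.mem_filter.mp h1
        have hii : i' = i := (Option.some_injective _ hii').symm
        rw [hii, ptotal_one] at hle
        have hfe : univ.filter (fun j : Fin (2 * n) => some j ∈ Z ∧ j ≤ i) = T := by
          ext j
          constructor
          · intro h
            exact (memT j).mpr (Finset.mem_filter.mp h).2.1
          · intro hj
            exact Finset.mem_filter.mpr ⟨Finset.mem_univ j, (memT j).mp hj, T.le_max' j hj⟩
        rw [hfe] at hle
        simp only [Finset.sum_const, smul_eq_mul, mul_one] at hle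
        omega
    · -- g rejects everything
      obtain ⟨z, hz⟩ := hne
      have := hg hz
      unfold CgOracle CPartG at this
      rw [if_neg hy] at this
      exact absurd this (Finset.notMem_empty z)

lemma cif_unstable (n : ℕ) (I : Finset (Fin (2 * n))) (hI : I.card = n) :
    ¬ (pnet (CIf n I) (CgOracle n)).Stable ∅ := by
  rintro ⟨-, hno⟩
  apply hno
  refine ⟨insert none (I.image some), Finset.insert_nonempty _ _,
    Finset.disjoint_empty_right _, ?_⟩
  intro b _
  unfold TradingNetwork.AccAlongside
  simp only [pnet_own, Finset.empty_union]
  simp only [pnet, reduceIte]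
  cases b
  <;> simp only [Bool.false_eq_true, if_false, if_true]
  · -- firm f, choice CIf
    have : CIf n I (insert none (I.image some)) = insert none (I.image some) := by
      unfold CIf
      rw [if_pos (Or.inr (Finset.erase_insert (none_notMem_image_some I)))]
    rw [this]
  · -- firm g
    unfold CgOracle CPartG
    rw [if_pos (Finset.mem_insert_self _ _)]
    intro x hx
    rcases Finset.mem_insert.mp hx with h1 | h1
    · rw [h1]; exact Finset.mem_insert_self _ _
    · obtain ⟨j, hjI, rfl⟩ := Finset.mem_image.mp h1
      apply Finset.mem_insert_of_mem
      rw [Finset.mem_filter]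
      refine ⟨hx, j, rfl, ?_⟩
      rw [ptotal_one]
      have hsub : univ.filter
          (fun j' : Fin (2 * n) => some j' ∈ insert none (I.image some) ∧ j' ≤ j) ⊆ I := by
        intro j' hj'
        rw [Finset.mem_filter] at hj'
        rcases Finset.mem_insert.mp hj'.2.1 with h2 | h2
        · exact absurd h2 (Option.some_ne_none j')
        · obtain ⟨j'', hj'', hj3⟩ := Finset.mem_image.mp h2
          have : j'' = j' := by injection hj3
          rwa [← this]
      have := Finset.card_le_card hsub
      simp only [Finset.sum_const, smul_eq_mul, mul_one]
      omega

/-- Deciding stability of the empty outcome in the oracle network, where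
`f`'s choice function is accessible only through queries and is promised to be `C_0^f` or
`C_I^f` for some unknown `n`-element `I`, requires `(2n choose n)` oracle calls: any set of
fewer than `(2n choose n)` queried offer sets leaves some `I` whose answers agree with
`C_0^f` on every query, although the empty outcome is stable for `C_0^f` and unstable
for `C_I^f`. -/
theorem oracle_lower_bound (n : ℕ) (queries : Finset (Finset (PContract (2 * n))))
    (hq : queries.card < Nat.choose (2 * n) n) :
    ∃ I : Finset (Fin (2 * n)), I.card = n ∧
      (∀ W ∈ queries, CIf n I W = C0f n W) ∧
      ¬ (pnet (CIf n I) (CgOracle n)).Stable ∅ ∧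
      (pnet (C0f n) (CgOracle n)).Stable ∅ := by
  obtain ⟨I, hI, hagree⟩ := exists_good_I n queries hq
  exact ⟨I, hI, hagree, cif_unstable n I hI, c0f_stable n⟩
end

section
/- In the two-firm network with choice functions C_I^f and C^g, the empty outcome is not stable, and the unique blocking set is X_I ∪ {y}. -/
open Finset

lemma pnet_own_s17 {k : ℕ} (Cf Cg : Finset (PContract k) → Finset (PContract k))
    (h : Bool) (Z : Finset (PContract k)) : (pnet Cf Cg).own h Z = Z := by
  unfold TradingNetwork.own
  apply Finset.filter_true_of_mem
  intro x _
  rcases x with _ | i <;> cases h <;> simp [pnet]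

lemma pnet_blocks_iff {k : ℕ} (Cf Cg : Finset (PContract k) → Finset (PContract k))
    (Z : Finset (PContract k)) :
    (pnet Cf Cg).Blocks ∅ Z ↔ Z.Nonempty ∧ Z ⊆ Cf Z ∧ Z ⊆ Cg Z := by
  unfold TradingNetwork.Blocks TradingNetwork.Involved TradingNetwork.AccAlongside
  simp only [pnet_own_s17, Finset.disjoint_empty_right, true_and, Finset.empty_union]
  constructor
  · rintro ⟨hne, h⟩
    refine ⟨hne, ?_, ?_⟩
    · simpa [pnet] using h false hne
    · simpa [pnet] using h true hne
  · rintro ⟨hne, hf, hg⟩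
    refine ⟨hne, ?_⟩
    intro f _
    cases f
    · simpa [pnet] using hf
    · simpa [pnet] using hg

lemma erase_none_card {k : ℕ} (Z : Finset (PContract k)) :
    (Z.erase none).card = (Finset.univ.filter (fun i => some i ∈ Z)).card := by
  rw [← Finset.card_image_of_injective _ (Option.some_injective (Fin k))]
  congr 1
  ext x
  cases x <;> simp

lemma subset_CgOracle_iff (n : ℕ) (Z : Finset (PContract (2 * n))) (hne : Z.Nonempty) :
    Z ⊆ CgOracle n Z ↔ none ∈ Z ∧ (Z.erase none).card ≤ n := by
  unfold CgOracle CPartG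
  have hpt : ptotal (fun _ : Fin (2 * n) => 1) = 2 * n := by simp [ptotal]
  by_cases h0 : none ∈ Z
  · simp only [if_pos h0]
    rw [erase_none_card]
    set S := Finset.univ.filter (fun i => some i ∈ Z) with hS
    constructor
    · intro hsub
      refine ⟨h0, ?_⟩
      by_cases hSe : S.Nonempty
      · set i := S.max' hSe with hi
        have hiS : i ∈ S := S.max'_mem hSe
        have hiZ : some i ∈ Z := by
          have := hiS; rw [hS] at this; simpa using this
        have := hsub hiZ
        simp only [Finset.mem_insert, Finset.mem_filter] at this
        rcases this with h | ⟨_, j, hji, hsum⟩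
        · exact absurd h (by simp)
        · have hji' : j = i := Option.some_injective _ hji.symm
          subst hji'
          rw [hpt] at hsum
          have hfil : Finset.univ.filter (fun l => some l ∈ Z ∧ l ≤ i) = S := by
            ext l
            simp only [Finset.mem_filter, Finset.mem_univ, true_and, hS]
            constructor
            · exact fun h => h.1
            · intro h
              refine ⟨h, S.le_max' l ?_⟩
              rw [hS]; simpa using h
          rw [hfil] at hsum
          simp only [Finset.sum_const, smul_eq_mul, mul_one] at hsum
          omega
      · rw [Finset.not_nonempty_iff_eq_empty] at hSe
        simp [hSe]
    · rintro ⟨_, hcard⟩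
      intro x hx
      cases x with
      | none => simp
      | some i =>
        simp only [Finset.mem_insert, Finset.mem_filter]
        right
        refine ⟨hx, i, rfl, ?_⟩
        rw [hpt]
        have hsub2 : Finset.univ.filter (fun j => some j ∈ Z ∧ j ≤ i) ⊆ S := by
          intro j hj
          simp only [Finset.mem_filter, Finset.mem_univ, true_and, hS] at hj ⊢
          exact hj.1
        have := Finset.card_le_card hsub2
        simp only [Finset.sum_const, smul_eq_mul, mul_one]
        omega
  · simp only [if_neg h0]
    constructor
    · intro hsub
      exact absurd (Finset.subset_empty.mp hsub) hne.ne_empty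
    · rintro ⟨h, _⟩
      exact absurd h h0

lemma subset_CIf_iff (n : ℕ) (I : Finset (Fin (2 * n))) (Z : Finset (PContract (2 * n)))
    (h0 : none ∈ Z) :
    Z ⊆ CIf n I Z ↔ (n + 1 ≤ (Z.erase none).card ∨ Z.erase none = I.image some) := by
  unfold CIf
  by_cases hc : n + 1 ≤ (Z.erase none).card ∨ Z.erase none = I.image some
  · rw [if_pos hc]; exact iff_of_true (Finset.Subset.refl _) hc
  · simp only [if_neg hc, iff_false_intro hc, iff_false]
    intro hsub
    exact absurd (hsub h0) (by simp)

/-- In the two-firm network with choice functions `C_I^f` and `C^g`, the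
empty outcome is not stable, and the unique blocking set is `X_I ∪ {y}`. -/
theorem oracle_unique_blocking_set (n : ℕ) (I : Finset (Fin (2 * n))) (hI : I.card = n) :
    ¬ (pnet (CIf n I) (CgOracle n)).Stable ∅ ∧
      ∀ Z : Finset (PContract (2 * n)),
        (pnet (CIf n I) (CgOracle n)).Blocks ∅ Z ↔ Z = insert none (I.image some) := by
  have hnotin : (none : PContract (2 * n)) ∉ I.image some := by simp
  have key : ∀ Z : Finset (PContract (2 * n)),
      (pnet (CIf n I) (CgOracle n)).Blocks ∅ Z ↔ Z = insert none (I.image some) := by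
    intro Z
    rw [pnet_blocks_iff]
    constructor
    · rintro ⟨hne, hf, hg⟩
      obtain ⟨h0, hcard⟩ := (subset_CgOracle_iff n Z hne).mp hg
      rcases (subset_CIf_iff n I Z h0).mp hf with h | h
      · omega
      · rw [← Finset.insert_erase h0, h]
    · rintro rfl
      have h0 : (none : PContract (2 * n)) ∈ insert none (I.image some) :=
        Finset.mem_insert_self _ _
      have hne : (insert none (I.image some)).Nonempty := ⟨none, h0⟩
      have herase : (insert (none : PContract (2 * n)) (I.image some)).erase none
          = I.image some := by
        rw [Finset.erase_insert hnotin]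
      refine ⟨hne, ?_, ?_⟩
      · rw [subset_CIf_iff n I _ h0, herase]
        exact Or.inr rfl
      · rw [subset_CgOracle_iff n _ hne, herase,
          Finset.card_image_of_injective _ (Option.some_injective (Fin (2 * n))), hI]
        exact ⟨h0, le_refl n⟩
  refine ⟨?_, key⟩
  rintro ⟨_, hblock⟩
  exact hblock ⟨insert none (I.image some), (key _).mpr rfl⟩
end

section
/- The choice functions C_0^f and C_I^f (for any n-element subset I of {1,...,2n}) satisfy full substitutability and IRC. -/
open Finset

namespace OracleAux

variable {k : ℕ}

/-- Generic "accept all upstream, accept `y` iff `P` of the upstream set" choice. -/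
def Cgen (P : Finset (PContract k) → Prop) [DecidablePred P]
    (W : Finset (PContract k)) : Finset (PContract k) :=
  if P (W.erase none) then W else W.erase none

variable (P : Finset (PContract k) → Prop) [DecidablePred P]
variable (Cg : Finset (PContract k) → Finset (PContract k))

lemma C_false (W : Finset (PContract k)) :
    (pnet (Cgen P) Cg).C false W = Cgen P W := rfl

lemma erase_subset_Cgen (W : Finset (PContract k)) : W.erase none ⊆ Cgen P W := by
  unfold Cgen; split
  · exact Finset.erase_subset _ _
  · exact Finset.Subset.rfl

lemma irc_gen : (pnet (Cgen P) Cg).IRCAt false := by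
  intro Y Z h1 h2
  rw [C_false, C_false] at *
  have he : Y.erase none ⊆ Z := (erase_subset_Cgen P Y).trans h1
  have heq : Z.erase none = Y.erase none := by
    apply Finset.Subset.antisymm (Finset.erase_subset_erase _ h2)
    intro x hx
    rcases Finset.mem_erase.mp hx with ⟨hne, hxY⟩
    exact Finset.mem_erase.mpr ⟨hne, he hx⟩
  by_cases hP : P (Y.erase none)
  · have hY : Cgen P Y = Y := if_pos hP
    have hZ : Z = Y := Finset.Subset.antisymm h2 (by rw [hY] at h1; exact h1)
    rw [hZ]
  · rw [Cgen, Cgen, heq, if_neg hP, if_neg hP]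

lemma inter_XB (Y : Finset (PContract k)) :
    Y ∩ (pnet (Cgen P) Cg).XB false = Y.erase none := by
  ext x
  cases x <;> simp [pnet, TradingNetwork.XB]

lemma inter_XS (Z : Finset (PContract k)) :
    Z ∩ (pnet (Cgen P) Cg).XS false = if none ∈ Z then {none} else ∅ := by
  ext x
  cases x <;> split <;> simp_all [pnet, TradingNetwork.XS]

lemma offered_erase (Y Z : Finset (PContract k)) :
    ((Y ∩ (pnet (Cgen P) Cg).XB false) ∪ (Z ∩ (pnet (Cgen P) Cg).XS false)).erase none
      = Y.erase none := by
  rw [inter_XB, inter_XS]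
  ext x
  rcases x with _ | i
  · simp
  · split <;> simp

lemma CB_eq (Y Z : Finset (PContract k)) :
    (pnet (Cgen P) Cg).CB false Y Z = Y.erase none := by
  rw [TradingNetwork.CB, C_false, Cgen, offered_erase]
  split
  · rw [inter_XB P Cg Y] at *
    rw [Finset.union_inter_distrib_right, inter_XB]
    have : (Y.erase none).erase none = Y.erase none := Finset.erase_idem
    rw [this]
    have h2 : (Z ∩ (pnet (Cgen P) Cg).XS false) ∩ (pnet (Cgen P) Cg).XB false = ∅ := by
      rw [inter_XS]
      split <;> · ext x; rcases x with _ | i <;> simp [pnet, TradingNetwork.XB]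
    rw [h2, Finset.union_empty]
  · rw [inter_XB P Cg (Y.erase none), Finset.erase_idem]

lemma RB_eq (Y Z : Finset (PContract k)) :
    (pnet (Cgen P) Cg).RB false Y Z = ∅ := by
  rw [TradingNetwork.RB, CB_eq, inter_XB, Finset.sdiff_self]

lemma CS_eq (Y Z : Finset (PContract k)) :
    (pnet (Cgen P) Cg).CS false Z Y
      = if none ∈ Z ∧ P (Y.erase none) then {none} else ∅ := by
  rw [TradingNetwork.CS, C_false, Cgen, offered_erase]
  by_cases hP : P (Y.erase none)
  · rw [if_pos hP, Finset.union_inter_distrib_right]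
    have h1 : (Y ∩ (pnet (Cgen P) Cg).XB false) ∩ (pnet (Cgen P) Cg).XS false = ∅ := by
      rw [inter_XB]
      ext x; rcases x with _ | i <;> simp [pnet, TradingNetwork.XS]
    rw [h1, Finset.empty_union, Finset.inter_assoc, Finset.inter_self, inter_XS]
    split <;> simp_all
  · rw [if_neg hP]
    have : (Y.erase none) ∩ (pnet (Cgen P) Cg).XS false = ∅ := by
      ext x; rcases x with _ | i <;> simp [pnet, TradingNetwork.XS]
    rw [this]
    simp [hP]

lemma RS_eq (Y Z : Finset (PContract k)) :
    (pnet (Cgen P) Cg).RS false Z Y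
      = if none ∈ Z ∧ ¬ P (Y.erase none) then {none} else ∅ := by
  rw [TradingNetwork.RS, CS_eq, inter_XS]
  by_cases hZ : none ∈ Z <;> by_cases hP : P (Y.erase none) <;> simp [hZ, hP]

lemma fs_gen (hmono : ∀ U' U : Finset (PContract k), U' ⊆ U → P U' → P U) :
    (pnet (Cgen P) Cg).FullySubstitutableAt false := by
  intro Y' Y Z' Z hY hZ
  refine ⟨?_, ?_, ?_, ?_⟩
  · rw [RB_eq]; exact Finset.empty_subset _
  · rw [RS_eq, RS_eq]
    split
    · rename_i h
      rw [if_pos ⟨hZ h.1, h.2⟩]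
    · exact Finset.empty_subset _
  · rw [RB_eq]; exact Finset.empty_subset _
  · rw [RS_eq, RS_eq]
    split
    · rename_i h
      have : ¬ P (Y'.erase none) := fun hp =>
        h.2 (hmono _ _ (Finset.erase_subset_erase _ hY) hp)
      rw [if_pos ⟨h.1, this⟩]
    · exact Finset.empty_subset _

end OracleAux

/-- The choice functions `C_0^f` and `C_I^f` (for any `n`-element set
`I`) satisfy full substitutability and the irrelevance of rejected contracts condition. -/
theorem oracle_choice_fullySubstitutable_IRC (n : ℕ) (I : Finset (Fin (2 * n)))
    (hI : I.card = n) :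
    ((pnet (C0f n) (CgOracle n)).IRCAt false ∧
      (pnet (C0f n) (CgOracle n)).FullySubstitutableAt false) ∧
    ((pnet (CIf n I) (CgOracle n)).IRCAt false ∧
      (pnet (CIf n I) (CgOracle n)).FullySubstitutableAt false) := by
  have e0 : C0f n = OracleAux.Cgen (fun U => n + 1 ≤ U.card) := rfl
  have eI : CIf n I = OracleAux.Cgen (fun U => n + 1 ≤ U.card ∨ U = I.image some) := rfl
  have m0 : ∀ U' U : Finset (PContract (2 * n)), U' ⊆ U →
      n + 1 ≤ U'.card → n + 1 ≤ U.card :=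
    fun _ _ h hc => hc.trans (Finset.card_le_card h)
  have mI : ∀ U' U : Finset (PContract (2 * n)), U' ⊆ U →
      (n + 1 ≤ U'.card ∨ U' = I.image some) → (n + 1 ≤ U.card ∨ U = I.image some) := by
    intro U' U hsub h
    rcases h with h | h
    · exact Or.inl (h.trans (Finset.card_le_card hsub))
    · by_cases he : U = U'
      · exact Or.inr (he.trans h)
      · left
        have hcard : U'.card = n := by
          rw [h, Finset.card_image_of_injective _ (Option.some_injective _), hI]
        have hlt : U'.card < U.card :=
          Finset.card_lt_card (ssubset_of_subset_of_ne hsub fun e => he e.symm)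
        omega
  rw [e0, eI]
  exact ⟨⟨OracleAux.irc_gen _ _, OracleAux.fs_gen _ _ m0⟩,
         ⟨OracleAux.irc_gen _ _, OracleAux.fs_gen _ _ mI⟩⟩
end
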